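/- arXiv:2301.11437 — 9 statements merged into one kernel-verified Lean document; each statement's English description precedes it below -/
import Mathlib

section
/- Let E and F be elliptic curves over K_P whose Weierstrass coefficients lie in R_P. Assume E and F are equivalent, i.e., F is obtained from E by a variable change (u,l,m,n) with u,l,m,n ∈ K_P and u ≠ 0, and assume v_P(Δ(E)) = v_P(Δ(F)). Then there exist u',l',m',n' ∈ R_P with v_P(u') = 0 such that F is obtained from E by the variable change (u',l',m',n'). -/
open WeierstrassCurve

section ValuationHelpers

variable {K : Type*} [Field K] {Γ : Type*} [LinearOrderedCommGroupWithZero Γ]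

private lemma vsub_lt (w : Valuation K Γ) {x y : K} {g : Γ} (hx : w x < g) (hy : w y < g) :
    w (x - y) < g := by
  rw [sub_eq_add_neg]
  exact Valuation.map_add_lt w hx (by rwa [Valuation.map_neg])

private lemma vsub_le (w : Valuation K Γ) {x y : K} {g : Γ} (hx : w x ≤ g) (hy : w y ≤ g) :
    w (x - y) ≤ g := by
  rw [sub_eq_add_neg]
  exact Valuation.map_add_le w hx (by rwa [Valuation.map_neg])

/-- The key integrality lemma: if a variable change `(u, r, s, t)` with `u` of valuation one
relates two integral Weierstrass equations, then `r`, `s`, `t` are integral. -/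
private lemma integral_rst (w : Valuation K Γ) (a1 a2 a3 a4 a6 b2 b4 b6 r s t : K)
    (ha1 : w a1 ≤ 1) (ha2 : w a2 ≤ 1) (ha3 : w a3 ≤ 1) (ha4 : w a4 ≤ 1) (ha6 : w a6 ≤ 1)
    (hb2 : w b2 ≤ 1) (hb4 : w b4 ≤ 1) (hb6 : w b6 ≤ 1)
    (E1 : w (a1 + 2 * s) ≤ 1)
    (E2 : w (a2 - s * a1 + 3 * r - s ^ 2) ≤ 1)
    (E4 : w (a4 - s * a3 + 2 * r * a2 - (t + r * s) * a1 + 3 * r ^ 2 - 2 * s * t) ≤ 1)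
    (E6 : w (a6 + r * a4 + r ^ 2 * a2 + r ^ 3 - t * a3 - t ^ 2 - r * t * a1) ≤ 1)
    (Eb6 : w (b6 + 2 * r * b4 + r ^ 2 * b2 + 4 * r ^ 3) ≤ 1) :
    w s ≤ 1 ∧ w r ≤ 1 ∧ w t ≤ 1 := by
  have hws : w s ≤ 1 := by
    by_contra hscon
    push_neg at hscon
    have hs : (1 : Γ) < w s := hscon
    have h2s : w (2 * s) ≤ 1 := by
      have h : (2 * s : K) = (a1 + 2 * s) - a1 := by ring
      rw [h]; exact vsub_le w E1 ha1
    have hw2 : w 2 < 1 := by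
      by_contra h
      push_neg at h
      have hle : w s ≤ w (2 * s) := by
        rw [Valuation.map_mul]
        exact le_mul_of_one_le_left' h
      exact absurd (hle.trans h2s) (not_le.mpr hs)
    have hw3 : w 3 = 1 := by
      have h31 : (3 : K) = 2 + 1 := by norm_num
      rw [h31, Valuation.map_add_eq_of_lt_right, Valuation.map_one]
      rwa [Valuation.map_one]
    have h1s2 : (1 : Γ) < w s ^ 2 := one_lt_pow₀ hs two_ne_zero
    have h1s4 : (1 : Γ) < w s ^ 4 := one_lt_pow₀ hs (by norm_num)
    have hspow : ∀ m n : ℕ, m < n → w s ^ m < w s ^ n := fun m n h =>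
      pow_lt_pow_right₀ hs h
    have hs1 : w s < w s ^ 2 := by
      conv_lhs => rw [← pow_one (w s)]
      exact hspow 1 2 (by norm_num)
    -- `w r = w s ^ 2`
    have hr2 : w r = w s ^ 2 := by
      have key : (3 * r : K) = s ^ 2 + ((a2 - s * a1 + 3 * r - s ^ 2) - a2 + s * a1) := by
        ring
      have hlt : w ((a2 - s * a1 + 3 * r - s ^ 2) - a2 + s * a1) < w (s ^ 2) := by
        rw [Valuation.map_pow]
        refine Valuation.map_add_lt w
          (vsub_lt w (E2.trans_lt h1s2) (ha2.trans_lt h1s2)) ?_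
        calc w (s * a1) = w s * w a1 := Valuation.map_mul w s a1
          _ ≤ w s * 1 := mul_le_mul_right ha1 _
          _ = w s := mul_one _
          _ < w s ^ 2 := hs1
      have h3r : w (3 * r) = w s ^ 2 := by
        rw [key, Valuation.map_add_eq_of_lt_left _ hlt, Valuation.map_pow]
      rwa [Valuation.map_mul, hw3, one_mul] at h3r
    -- `w t ≥ w s ^ 4`
    have hT : w s ^ 4 ≤ w t := by
      by_contra h
      push_neg at h
      have key : (3 * r ^ 2 : K) =
          (a4 - s * a3 + 2 * r * a2 - (t + r * s) * a1 + 3 * r ^ 2 - 2 * s * t)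
            - a4 + s * a3 - 2 * r * a2 + (t + r * s) * a1 + 2 * s * t := by ring
      have hlhs : w (3 * r ^ 2) = w s ^ 4 := by
        rw [Valuation.map_mul, hw3, one_mul, Valuation.map_pow, hr2, ← pow_mul]
      have hsa3 : w (s * a3) < w s ^ 4 := by
        calc w (s * a3) = w s * w a3 := Valuation.map_mul w s a3
          _ ≤ w s * 1 := mul_le_mul_right ha3 _
          _ = w s := mul_one _
          _ < w s ^ 4 := by
              conv_lhs => rw [← pow_one (w s)]
              exact hspow 1 4 (by norm_num)
      have h2ra2 : w (2 * r * a2) < w s ^ 4 := by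
        calc w (2 * r * a2) = w 2 * w r * w a2 := by
              rw [Valuation.map_mul, Valuation.map_mul]
          _ ≤ 1 * w r * 1 := mul_le_mul' (mul_le_mul' hw2.le le_rfl) ha2
          _ = w r := by rw [one_mul, mul_one]
          _ = w s ^ 2 := hr2
          _ < w s ^ 4 := hspow 2 4 (by norm_num)
      have htrs : w ((t + r * s) * a1) < w s ^ 4 := by
        have hin : w (t + r * s) < w s ^ 4 := by
          refine Valuation.map_add_lt w h ?_
          calc w (r * s) = w r * w s := Valuation.map_mul w r s
            _ = w s ^ 2 * w s := by rw [hr2]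
            _ = w s ^ 3 := (pow_succ (w s) 2).symm
            _ < w s ^ 4 := hspow 3 4 (by norm_num)
        calc w ((t + r * s) * a1) = w (t + r * s) * w a1 := Valuation.map_mul w _ _
          _ ≤ w (t + r * s) * 1 := mul_le_mul_right ha1 _
          _ = w (t + r * s) := mul_one _
          _ < w s ^ 4 := hin
      have h2st : w (2 * s * t) < w s ^ 4 := by
        calc w (2 * s * t) = w (2 * s) * w t := Valuation.map_mul w _ _
          _ ≤ 1 * w t := mul_le_mul_left h2s _
          _ = w t := one_mul _
          _ < w s ^ 4 := h
      have hrhs : w ((a4 - s * a3 + 2 * r * a2 - (t + r * s) * a1 + 3 * r ^ 2 - 2 * s * t)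
          - a4 + s * a3 - 2 * r * a2 + (t + r * s) * a1 + 2 * s * t) < w s ^ 4 :=
        Valuation.map_add_lt w (Valuation.map_add_lt w (vsub_lt w (Valuation.map_add_lt w
          (vsub_lt w (E4.trans_lt h1s4) (ha4.trans_lt h1s4)) hsa3) h2ra2) htrs) h2st
      rw [key] at hlhs
      exact absurd hlhs (ne_of_lt hrhs)
    -- final contradiction using the `a₆` relation
    have hts : (1 : Γ) < w t := lt_of_lt_of_le h1s4 hT
    have ht0 : w t ≠ 0 := (zero_lt_one.trans hts).ne'
    have h1t2 : (1 : Γ) < w t ^ 2 := one_lt_pow₀ hts two_ne_zero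
    have h88 : w s ^ 8 ≤ w t ^ 2 := by
      calc w s ^ 8 = (w s ^ 4) ^ 2 := by rw [← pow_mul]
        _ ≤ w t ^ 2 := pow_le_pow_left' hT 2
    have key : (t ^ 2 : K) = a6 + r * a4 + r ^ 2 * a2 + r ^ 3 - t * a3 - r * t * a1
        - (a6 + r * a4 + r ^ 2 * a2 + r ^ 3 - t * a3 - t ^ 2 - r * t * a1) := by ring
    have hra4 : w (r * a4) < w t ^ 2 := by
      calc w (r * a4) = w r * w a4 := Valuation.map_mul w _ _
        _ ≤ w r * 1 := mul_le_mul_right ha4 _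
        _ = w s ^ 2 := by rw [mul_one, hr2]
        _ < w s ^ 8 := hspow 2 8 (by norm_num)
        _ ≤ w t ^ 2 := h88
    have hr2a2 : w (r ^ 2 * a2) < w t ^ 2 := by
      calc w (r ^ 2 * a2) = w r ^ 2 * w a2 := by rw [Valuation.map_mul, Valuation.map_pow]
        _ ≤ w r ^ 2 * 1 := mul_le_mul_right ha2 _
        _ = (w s ^ 2) ^ 2 := by rw [mul_one, hr2]
        _ = w s ^ 4 := by rw [← pow_mul]
        _ < w s ^ 8 := hspow 4 8 (by norm_num)
        _ ≤ w t ^ 2 := h88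
    have hr3 : w (r ^ 3) < w t ^ 2 := by
      calc w (r ^ 3) = w r ^ 3 := Valuation.map_pow w r 3
        _ = (w s ^ 2) ^ 3 := by rw [hr2]
        _ = w s ^ 6 := by rw [← pow_mul]
        _ < w s ^ 8 := hspow 6 8 (by norm_num)
        _ ≤ w t ^ 2 := h88
    have hta3 : w (t * a3) < w t ^ 2 := by
      calc w (t * a3) = w t * w a3 := Valuation.map_mul w _ _
        _ ≤ w t * 1 := mul_le_mul_right ha3 _
        _ = w t := mul_one _
        _ < w t ^ 2 := by
            conv_lhs => rw [← pow_one (w t)]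
            exact pow_lt_pow_right₀ hts (by norm_num)
    have hrta1 : w (r * t * a1) < w t ^ 2 := by
      have hs2t : w s ^ 2 < w t := lt_of_lt_of_le (hspow 2 4 (by norm_num)) hT
      calc w (r * t * a1) = w r * w t * w a1 := by rw [Valuation.map_mul, Valuation.map_mul]
        _ ≤ w r * w t * 1 := mul_le_mul_right ha1 _
        _ = w t * w s ^ 2 := by rw [mul_one, hr2, mul_comm]
        _ < w t * w t := mul_lt_mul_of_le_of_lt_of_nonneg_of_pos le_rfl hs2t zero_le' (zero_lt_iff.mpr ht0)
        _ = w t ^ 2 := (sq (w t)).symm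
    have hO : w (t ^ 2) = w t ^ 2 := Valuation.map_pow w t 2
    rw [key] at hO
    have hrhs : w (a6 + r * a4 + r ^ 2 * a2 + r ^ 3 - t * a3 - r * t * a1
        - (a6 + r * a4 + r ^ 2 * a2 + r ^ 3 - t * a3 - t ^ 2 - r * t * a1)) < w t ^ 2 :=
      vsub_lt w (vsub_lt w (vsub_lt w (Valuation.map_add_lt w (Valuation.map_add_lt w
        (Valuation.map_add_lt w (ha6.trans_lt h1t2) hra4) hr2a2) hr3) hta3) hrta1)
        (E6.trans_lt h1t2)
    exact absurd hO (ne_of_lt hrhs)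
  have hwr : w r ≤ 1 := by
    by_contra hrcon
    push_neg at hrcon
    have hrc : (1 : Γ) < w r := hrcon
    have h1r3 : (1 : Γ) < w r ^ 3 := one_lt_pow₀ hrc three_ne_zero
    have hrpow : ∀ m n : ℕ, m < n → w r ^ m < w r ^ n := fun m n h =>
      pow_lt_pow_right₀ hrc h
    have h3r : w (3 * r) ≤ 1 := by
      have key : (3 * r : K) = (a2 - s * a1 + 3 * r - s ^ 2) - a2 + s * a1 + s ^ 2 := by ring
      rw [key]
      refine Valuation.map_add_le w (Valuation.map_add_le w (vsub_le w E2 ha2) ?_) ?_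
      · rw [Valuation.map_mul]; exact mul_le_one' hws ha1
      · rw [Valuation.map_pow]; exact pow_le_one' hws 2
    have hw3 : w 3 < 1 := by
      by_contra h
      push_neg at h
      have hle : w r ≤ w (3 * r) := by
        rw [Valuation.map_mul]
        exact le_mul_of_one_le_left' h
      exact absurd (hle.trans h3r) (not_le.mpr hrc)
    have hw2 : w 2 = 1 := by
      have h2 : (2 : K) = 3 + (-1) := by norm_num
      rw [h2, Valuation.map_add_eq_of_lt_right, Valuation.map_neg, Valuation.map_one]
      rw [Valuation.map_neg, Valuation.map_one]
      exact hw3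
    have key : (4 * r ^ 3 : K) =
        (b6 + 2 * r * b4 + r ^ 2 * b2 + 4 * r ^ 3) - b6 - 2 * r * b4 - r ^ 2 * b2 := by ring
    have hlhs : w (4 * r ^ 3) = w r ^ 3 := by
      have h4 : (4 : K) = 2 * 2 := by norm_num
      rw [Valuation.map_mul, h4, Valuation.map_mul, hw2, one_mul, one_mul, Valuation.map_pow]
    have h2rb4 : w (2 * r * b4) < w r ^ 3 := by
      calc w (2 * r * b4) = w 2 * w r * w b4 := by rw [Valuation.map_mul, Valuation.map_mul]
        _ ≤ 1 * w r * 1 := mul_le_mul' (mul_le_mul' hw2.le le_rfl) hb4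
        _ = w r := by rw [one_mul, mul_one]
        _ < w r ^ 3 := by
            conv_lhs => rw [← pow_one (w r)]
            exact hrpow 1 3 (by norm_num)
    have hr2b2 : w (r ^ 2 * b2) < w r ^ 3 := by
      calc w (r ^ 2 * b2) = w r ^ 2 * w b2 := by rw [Valuation.map_mul, Valuation.map_pow]
        _ ≤ w r ^ 2 * 1 := mul_le_mul_right hb2 _
        _ = w r ^ 2 := mul_one _
        _ < w r ^ 3 := hrpow 2 3 (by norm_num)
    have hrhs : w ((b6 + 2 * r * b4 + r ^ 2 * b2 + 4 * r ^ 3) - b6 - 2 * r * b4 - r ^ 2 * b2)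
        < w r ^ 3 :=
      vsub_lt w (vsub_lt w (vsub_lt w (Eb6.trans_lt h1r3) (hb6.trans_lt h1r3)) h2rb4) hr2b2
    rw [key] at hlhs
    exact absurd hlhs (ne_of_lt hrhs)
  have hwt : w t ≤ 1 := by
    by_contra htcon
    push_neg at htcon
    have htc : (1 : Γ) < w t := htcon
    have h1t2 : (1 : Γ) < w t ^ 2 := one_lt_pow₀ htc two_ne_zero
    have htt : w t < w t ^ 2 := by
      conv_lhs => rw [← pow_one (w t)]
      exact pow_lt_pow_right₀ htc (by norm_num)
    have key : (t ^ 2 : K) = a6 + r * a4 + r ^ 2 * a2 + r ^ 3 - t * a3 - r * t * a1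
        - (a6 + r * a4 + r ^ 2 * a2 + r ^ 3 - t * a3 - t ^ 2 - r * t * a1) := by ring
    have hra4 : w (r * a4) < w t ^ 2 := by
      refine lt_of_le_of_lt ?_ h1t2
      rw [Valuation.map_mul]; exact mul_le_one' hwr ha4
    have hr2a2 : w (r ^ 2 * a2) < w t ^ 2 := by
      refine lt_of_le_of_lt ?_ h1t2
      rw [Valuation.map_mul, Valuation.map_pow]
      exact mul_le_one' (pow_le_one' hwr 2) ha2
    have hr3 : w (r ^ 3) < w t ^ 2 := by
      refine lt_of_le_of_lt ?_ h1t2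
      rw [Valuation.map_pow]; exact pow_le_one' hwr 3
    have hta3 : w (t * a3) < w t ^ 2 := by
      calc w (t * a3) = w t * w a3 := Valuation.map_mul w _ _
        _ ≤ w t * 1 := mul_le_mul_right ha3 _
        _ = w t := mul_one _
        _ < w t ^ 2 := htt
    have hrta1 : w (r * t * a1) < w t ^ 2 := by
      calc w (r * t * a1) = w r * w t * w a1 := by rw [Valuation.map_mul, Valuation.map_mul]
        _ ≤ 1 * w t * 1 := mul_le_mul' (mul_le_mul' hwr le_rfl) ha1
        _ = w t := by rw [one_mul, mul_one]
        _ < w t ^ 2 := htt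
    have hO : w (t ^ 2) = w t ^ 2 := Valuation.map_pow w t 2
    rw [key] at hO
    have hrhs : w (a6 + r * a4 + r ^ 2 * a2 + r ^ 3 - t * a3 - r * t * a1
        - (a6 + r * a4 + r ^ 2 * a2 + r ^ 3 - t * a3 - t ^ 2 - r * t * a1)) < w t ^ 2 :=
      vsub_lt w (vsub_lt w (vsub_lt w (Valuation.map_add_lt w (Valuation.map_add_lt w
        (Valuation.map_add_lt w (ha6.trans_lt h1t2) hra4) hr2a2) hr3) hta3) hrta1)
        (E6.trans_lt h1t2)
    exact absurd hO (ne_of_lt hrhs)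
  exact ⟨hws, hwr, hwt⟩

end ValuationHelpers

/-- Let `E` and `F` be elliptic curves over `K_P` whose Weierstrass
coefficients lie in the valuation ring `R_P` (modelled as Weierstrass curves over the
complete discrete valuation ring `R` with fraction field `K_P = FractionRing R`).
If `E` and `F` are related by some admissible variable change `(u, l, m, n)` over `K_P`
(with `u ≠ 0`) and `v_P(Δ(E)) = v_P(Δ(F))` (expressed via divisibility by powers of the
uniformizer `π`), then they are related by an admissible variable change whose datum
`(u', l', m', n')` has `u'` a unit of `R_P` (i.e. `v_P(u') = 0`) and `l', m', n' ∈ R_P`. -/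
theorem stmt_0 {R : Type*} [CommRing R] [IsDomain R] [IsDiscreteValuationRing R]
    (π : R) (hπ : Irreducible π)
    (E F : WeierstrassCurve R) (hE : E.Δ ≠ 0) (hF : F.Δ ≠ 0)
    (hequiv : ∃ C : VariableChange (FractionRing R),
      C • (E.map (algebraMap R (FractionRing R)))
        = F.map (algebraMap R (FractionRing R)))
    (hval : ∀ j : ℕ, π ^ j ∣ E.Δ ↔ π ^ j ∣ F.Δ) :
    ∃ C' : VariableChange R, C' • E = F := by
  classical
  obtain ⟨C, hC⟩ := hequiv
  set K := FractionRing R with hK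
  set φ := algebraMap R K with hφdef
  have hφ : Function.Injective φ := IsFractionRing.injective R K
  set w := ValuationRing.valuation R K with hwdef
  have hint : ∀ x : K, w x ≤ 1 ↔ ∃ a : R, φ a = x := by
    intro x
    rw [← Valuation.mem_integer_iff]
    exact ValuationRing.mem_integer_iff R K x
  have hintR : ∀ a : R, w (φ a) ≤ 1 := fun a => (hint _).mpr ⟨a, rfl⟩
  have hunit : ∀ v : Rˣ, w (φ ↑v) = 1 := by
    intro v
    have h1 : w (φ ↑v) * w (φ ↑v⁻¹) = 1 := by
      rw [← Valuation.map_mul, ← map_mul, Units.mul_inv, map_one, Valuation.map_one]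
    refine le_antisymm (hintR _) ?_
    have h2 := mul_le_mul_right (hintR (↑v⁻¹)) (w (φ ↑v))
    rw [mul_one, h1] at h2
    exact h2
  -- the discriminants have the same valuation
  obtain ⟨m, u1, hu1⟩ := IsDiscreteValuationRing.eq_unit_mul_pow_irreducible hE hπ
  obtain ⟨k, u2, hu2⟩ := IsDiscreteValuationRing.eq_unit_mul_pow_irreducible hF hπ
  have hmk : m = k := by
    have hd1 : π ^ m ∣ F.Δ := (hval m).mp ⟨↑u1, by rw [hu1]; ring⟩
    have hd2 : π ^ k ∣ E.Δ := (hval k).mpr ⟨↑u2, by rw [hu2]; ring⟩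
    rw [hu2] at hd1
    rw [hu1] at hd2
    have h1 : m ≤ k :=
      (pow_dvd_pow_iff hπ.ne_zero hπ.not_isUnit).mp (Units.dvd_mul_left.mp hd1)
    have h2 : k ≤ m :=
      (pow_dvd_pow_iff hπ.ne_zero hπ.not_isUnit).mp (Units.dvd_mul_left.mp hd2)
    omega
  have hΔmap := congrArg WeierstrassCurve.Δ hC
  rw [variableChange_Δ, map_Δ, map_Δ] at hΔmap
  have hπK : (φ π) ≠ 0 := fun h => hπ.ne_zero (hφ (by rw [h, map_zero]))
  have hu12 : (↑C.u : K) ^ 12 * φ ↑u2 = φ ↑u1 := by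
    have h0 : (↑C.u : K) ^ 12 * φ F.Δ = φ E.Δ := by
      rw [← hΔmap]
      linear_combination (φ E.Δ) * pow_mul_pow_eq_one 12 C.u.mul_inv
    rw [hu1, hu2, ← hmk, map_mul, map_mul, map_pow, ← mul_assoc] at h0
    exact mul_right_cancel₀ (pow_ne_zero m hπK) h0
  have hwu : w ↑C.u = 1 := by
    have h12 : (w ↑C.u) ^ 12 = 1 := by
      have h := congrArg w hu12
      rw [Valuation.map_mul, Valuation.map_pow, hunit, hunit, mul_one] at h
      exact h
    by_contra hne
    rcases lt_or_gt_of_ne hne with h | h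
    · exact absurd h12 (ne_of_lt (pow_lt_one₀ zero_le' h (by norm_num)))
    · exact absurd h12 (ne_of_gt (one_lt_pow₀ h (by norm_num)))
  have hwuinv : w ↑C.u⁻¹ = 1 := by
    have h1 : w ↑C.u * w ↑C.u⁻¹ = 1 := by
      rw [← Valuation.map_mul, C.u.mul_inv, Valuation.map_one]
    rwa [hwu, one_mul] at h1
  -- extract the coefficient relations
  have hA1 := congrArg a₁ hC
  rw [variableChange_a₁, map_a₁, map_a₁] at hA1
  have E1 : w (φ E.a₁ + 2 * C.s) ≤ 1 := by
    have h : φ E.a₁ + 2 * C.s = ↑C.u * φ F.a₁ := by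
      rw [← hA1]
      linear_combination (-(φ E.a₁ + 2 * C.s)) * C.u.mul_inv
    rw [h, Valuation.map_mul, hwu, one_mul]
    exact hintR _
  have hA2 := congrArg a₂ hC
  rw [variableChange_a₂] at hA2
  simp only [map_a₁, map_a₂] at hA2
  have E2 : w (φ E.a₂ - C.s * φ E.a₁ + 3 * C.r - C.s ^ 2) ≤ 1 := by
    have h : φ E.a₂ - C.s * φ E.a₁ + 3 * C.r - C.s ^ 2 = (↑C.u : K) ^ 2 * φ F.a₂ := by
      rw [← hA2]
      linear_combination (-(φ E.a₂ - C.s * φ E.a₁ + 3 * C.r - C.s ^ 2))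
        * pow_mul_pow_eq_one 2 C.u.mul_inv
    rw [h, Valuation.map_mul, Valuation.map_pow, hwu, one_pow, one_mul]
    exact hintR _
  have hA4 := congrArg a₄ hC
  rw [variableChange_a₄] at hA4
  simp only [map_a₁, map_a₂, map_a₃, map_a₄] at hA4
  have E4 : w (φ E.a₄ - C.s * φ E.a₃ + 2 * C.r * φ E.a₂ - (C.t + C.r * C.s) * φ E.a₁
      + 3 * C.r ^ 2 - 2 * C.s * C.t) ≤ 1 := by
    have h : φ E.a₄ - C.s * φ E.a₃ + 2 * C.r * φ E.a₂ - (C.t + C.r * C.s) * φ E.a₁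
        + 3 * C.r ^ 2 - 2 * C.s * C.t = (↑C.u : K) ^ 4 * φ F.a₄ := by
      rw [← hA4]
      linear_combination (-(φ E.a₄ - C.s * φ E.a₃ + 2 * C.r * φ E.a₂
        - (C.t + C.r * C.s) * φ E.a₁ + 3 * C.r ^ 2 - 2 * C.s * C.t))
        * pow_mul_pow_eq_one 4 C.u.mul_inv
    rw [h, Valuation.map_mul, Valuation.map_pow, hwu, one_pow, one_mul]
    exact hintR _
  have hA6 := congrArg a₆ hC
  rw [variableChange_a₆] at hA6
  simp only [map_a₁, map_a₂, map_a₃, map_a₄, map_a₆] at hA6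
  have E6 : w (φ E.a₆ + C.r * φ E.a₄ + C.r ^ 2 * φ E.a₂ + C.r ^ 3 - C.t * φ E.a₃
      - C.t ^ 2 - C.r * C.t * φ E.a₁) ≤ 1 := by
    have h : φ E.a₆ + C.r * φ E.a₄ + C.r ^ 2 * φ E.a₂ + C.r ^ 3 - C.t * φ E.a₃
        - C.t ^ 2 - C.r * C.t * φ E.a₁ = (↑C.u : K) ^ 6 * φ F.a₆ := by
      rw [← hA6]
      linear_combination (-(φ E.a₆ + C.r * φ E.a₄ + C.r ^ 2 * φ E.a₂ + C.r ^ 3 - C.t * φ E.a₃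
        - C.t ^ 2 - C.r * C.t * φ E.a₁)) * pow_mul_pow_eq_one 6 C.u.mul_inv
    rw [h, Valuation.map_mul, Valuation.map_pow, hwu, one_pow, one_mul]
    exact hintR _
  have hB6 := congrArg b₆ hC
  rw [variableChange_b₆] at hB6
  simp only [map_b₂, map_b₄, map_b₆] at hB6
  have Eb6 : w (φ E.b₆ + 2 * C.r * φ E.b₄ + C.r ^ 2 * φ E.b₂ + 4 * C.r ^ 3) ≤ 1 := by
    have h : φ E.b₆ + 2 * C.r * φ E.b₄ + C.r ^ 2 * φ E.b₂ + 4 * C.r ^ 3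
        = (↑C.u : K) ^ 6 * φ F.b₆ := by
      rw [← hB6]
      linear_combination (-(φ E.b₆ + 2 * C.r * φ E.b₄ + C.r ^ 2 * φ E.b₂ + 4 * C.r ^ 3))
        * pow_mul_pow_eq_one 6 C.u.mul_inv
    rw [h, Valuation.map_mul, Valuation.map_pow, hwu, one_pow, one_mul]
    exact hintR _
  obtain ⟨hs, hr, ht⟩ := integral_rst w (φ E.a₁) (φ E.a₂) (φ E.a₃) (φ E.a₄) (φ E.a₆)
    (φ E.b₂) (φ E.b₄) (φ E.b₆) C.r C.s C.t (hintR _) (hintR _) (hintR _) (hintR _)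
    (hintR _) (hintR _) (hintR _) (hintR _) E1 E2 E4 E6 Eb6
  obtain ⟨s₀, hs₀⟩ := (hint _).mp hs
  obtain ⟨r₀, hr₀⟩ := (hint _).mp hr
  obtain ⟨t₀, ht₀⟩ := (hint _).mp ht
  obtain ⟨a, ha⟩ := (hint _).mp hwu.le
  obtain ⟨b, hb⟩ := (hint _).mp hwuinv.le
  have hab : a * b = 1 := hφ (by rw [map_mul, ha, hb, map_one]; exact C.u.mul_inv)
  refine ⟨⟨⟨a, b, hab, by rwa [mul_comm]⟩, r₀, s₀, t₀⟩, ?_⟩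
  apply WeierstrassCurve.map_injective hφ
  beta_reduce
  rw [← map_variableChange]
  have hC' : VariableChange.map (⟨⟨a, b, hab, by rwa [mul_comm]⟩, r₀, s₀, t₀⟩ : VariableChange R) φ = C := by
    ext
    · exact ha
    · exact hr₀
    · exact hs₀
    · exact ht₀
  rw [hC', hC]
end

section
/- Assume p ≥ 5. Define φ : R_P^5 → R_P^2 by φ(a1,a2,a3,a4,a6) = (−b2²/48 + b4/2, −b2³/864 − b2·b4/24 + b6/4), where b2 = a1² + 4a2, b4 = a1a3 + 2a4, b6 = a3² + 4a6. Then for every open subset U of R_P^2, μ_P(φ^{-1}(U)) = μ_P(U), where the left-hand measure is the normalized Haar measure on K_P^5 and the right-hand one on K_P^2. -/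
open MeasureTheory

private lemma stmt3_isUnit_cast {R : Type*} [CommRing R] (p : ℕ) (hp : p.Prime) [CharP R p]
    (n : ℕ) (hn : ¬ p ∣ n) : IsUnit (n : R) := by
  haveI : Fact p.Prime := ⟨hp⟩
  have h1 : (ZMod.castHom (dvd_refl p) R) ((n : ZMod p)) = (n : R) := map_natCast _ n
  rw [← h1]
  have h2 : IsUnit (n : ZMod p) := by
    rw [isUnit_iff_ne_zero, Ne, ZMod.natCast_eq_zero_iff]
    exact hn
  exact h2.map (ZMod.castHom (dvd_refl p) R)

private lemma stmt3_secondCountable {R : Type*} [CommRing R] [IsLocalRing R]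
    [TopologicalSpace R] [IsTopologicalRing R]  [CompactSpace R]
    (hadic : IsAdic (IsLocalRing.maximalIdeal R)) :
    SecondCountableTopology R := by
  have hcg : (nhds (0:R)).IsCountablyGenerated := by
    rw [isAdic_iff] at hadic
    obtain ⟨hopen, hbasis⟩ := hadic
    have hb : (nhds (0:R)).HasBasis (fun _ : ℕ => True)
        (fun n => ((IsLocalRing.maximalIdeal R ^ n : Ideal R) : Set R)) := by
      constructor
      intro s
      simp only [true_and]
      exact ⟨hbasis s, fun ⟨n, hn⟩ =>
        Filter.mem_of_superset ((hopen n).mem_nhds (zero_mem _)) hn⟩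
    exact hb.isCountablyGenerated
  letI : UniformSpace R := IsTopologicalAddGroup.rightUniformSpace R
  haveI : IsUniformAddGroup R := isUniformAddGroup_of_addCommGroup
  have : (uniformity R).IsCountablyGenerated := by
    rw [uniformity_eq_comap_nhds_zero R]; infer_instance
  have : TopologicalSpace.PseudoMetrizableSpace R := UniformSpace.pseudoMetrizableSpace
  letI := TopologicalSpace.pseudoMetrizableSpacePseudoMetric R
  infer_instance


set_option maxHeartbeats 1000000

/-- Assume `p ≥ 5`. Define `φ : R_P^5 → R_P^2` by
`φ(a₁,a₂,a₃,a₄,a₆) = (−b₂²/48 + b₄/2, −b₂³/864 − b₂·b₄/24 + b₆/4)`, where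
`b₂ = a₁² + 4a₂`, `b₄ = a₁a₃ + 2a₄`, `b₆ = a₃² + 4a₆`. Then for every open subset `U` of
`R_P^2`, `μ_P(φ⁻¹(U)) = μ_P(U)`, the measures being the normalized Haar measures on
(the integer points of) `K_P^5` and `K_P^2` respectively. -/
theorem stmt_3 {R : Type*} [CommRing R] [IsDomain R] [IsDiscreteValuationRing R]
    [TopologicalSpace R] [IsTopologicalRing R] [CompactSpace R]
    [MeasurableSpace R] [BorelSpace R]
    (hadic : IsAdic (IsLocalRing.maximalIdeal R))
    [Finite (IsLocalRing.ResidueField R)]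
    (p : ℕ) (hp : p.Prime) (hp5 : 5 ≤ p) [CharP R p]
    (μ₅ : Measure (Fin 5 → R)) [μ₅.IsAddHaarMeasure] [IsProbabilityMeasure μ₅] [μ₅.Regular]
    (μ₂ : Measure (Fin 2 → R)) [μ₂.IsAddHaarMeasure] [IsProbabilityMeasure μ₂] [μ₂.Regular]
    (U : Set (Fin 2 → R)) (hU : IsOpen U) :
    μ₅ ((fun x : Fin 5 → R =>
        ![Ring.inverse (48 : R) * -((x 0) ^ 2 + 4 * x 1) ^ 2
            + Ring.inverse (2 : R) * (x 0 * x 2 + 2 * x 3),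
          Ring.inverse (864 : R) * -((x 0) ^ 2 + 4 * x 1) ^ 3
            - Ring.inverse (24 : R) * (((x 0) ^ 2 + 4 * x 1) * (x 0 * x 2 + 2 * x 3))
            + Ring.inverse (4 : R) * ((x 2) ^ 2 + 4 * x 4)]) ⁻¹' U) = μ₂ U := by

  classical
  -- units
  have hnd : ∀ n : ℕ, 0 < n → n < 5 → ¬ p ∣ n := by
    intro n h0 h5 hd
    have := Nat.le_of_dvd h0 hd
    omega
  have h2 : IsUnit (2 : R) := by
    have := stmt3_isUnit_cast (R := R) p hp 2 (hnd 2 (by norm_num) (by norm_num))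
    simpa using this
  have h3 : IsUnit (3 : R) := by
    have := stmt3_isUnit_cast (R := R) p hp 3 (hnd 3 (by norm_num) (by norm_num))
    simpa using this
  have h4 : IsUnit (4 : R) := by
    have : (4 : R) = 2 ^ 2 := by norm_num
    rw [this]; exact h2.pow 2
  have h24 : IsUnit (24 : R) := by
    have : (24 : R) = 2 ^ 3 * 3 := by norm_num
    rw [this]; exact (h2.pow 3).mul h3
  have h48 : IsUnit (48 : R) := by
    have : (48 : R) = 2 ^ 4 * 3 := by norm_num
    rw [this]; exact (h2.pow 4).mul h3
  have hi2 : Ring.inverse (2 : R) * 2 = 1 := Ring.inverse_mul_cancel _ h2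
  have hi4 : Ring.inverse (4 : R) * 4 = 1 := Ring.inverse_mul_cancel _ h4
  have hi24 : Ring.inverse (24 : R) * 24 = 1 := Ring.inverse_mul_cancel _ h24
  have hi48 : Ring.inverse (48 : R) * 48 = 1 := Ring.inverse_mul_cancel _ h48
  have hC : 2 * Ring.inverse (48 : R) = Ring.inverse (24 : R) := by
    calc 2 * Ring.inverse (48 : R)
        = (Ring.inverse (24 : R) * 24) * (2 * Ring.inverse (48 : R)) := by rw [hi24]; ring
      _ = Ring.inverse (24 : R) * (Ring.inverse (48 : R) * 48) := by ring
      _ = Ring.inverse (24 : R) := by rw [hi48]; ring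
  -- topology and instances
  haveI : SecondCountableTopology R := stmt3_secondCountable hadic
  haveI : LocallyCompactSpace R := inferInstance
  -- the Haar probability measure on R
  let ν : Measure R := Measure.addHaarMeasure (⊤ : TopologicalSpace.PositiveCompacts R)
  haveI : IsProbabilityMeasure ν := by
    constructor
    rw [← TopologicalSpace.PositiveCompacts.coe_top (α := R)]
    exact Measure.addHaarMeasure_self
  -- identify μ₅ and μ₂ with product measures
  have hμ₅ : μ₅ = Measure.pi (fun _ : Fin 5 => ν) :=
    Measure.isAddHaarMeasure_eq_of_isProbabilityMeasure μ₅ _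
  have hμ₂ : μ₂ = Measure.pi (fun _ : Fin 2 => ν) :=
    Measure.isAddHaarMeasure_eq_of_isProbabilityMeasure μ₂ _
  -- the building blocks
  set i2 := Ring.inverse (2 : R)
  set i4 := Ring.inverse (4 : R)
  set i24 := Ring.inverse (24 : R)
  set i48 := Ring.inverse (48 : R)
  set i864 := Ring.inverse (864 : R)
  let f₁ : (Fin 3 → R) → R := fun b => i48 * -((b 0) ^ 2 + 4 * b 1) ^ 2 + i2 * (b 0 * b 2)
  let g₁ : (Fin 3 → R) → R → R := fun b y =>
    i864 * -((b 0) ^ 2 + 4 * b 1) ^ 3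
      - i24 * (((b 0) ^ 2 + 4 * b 1) * (2 * y + i24 * ((b 0) ^ 2 + 4 * b 1) ^ 2))
      + i4 * (b 2) ^ 2
  have hf₁ : Continuous f₁ := by fun_prop
  have hg₁ : Continuous fun q : (Fin 3 → R) × R => g₁ q.1 q.2 := by fun_prop
  -- the fibrewise map on R × R
  have mpH : ∀ b : Fin 3 → R,
      MeasurePreserving (fun z : R × R => (z.1 + f₁ b, z.2 + g₁ b (z.1 + f₁ b)))
        (ν.prod ν) (ν.prod ν) := by
    intro b
    have m1 : MeasurePreserving (fun z : R × R => (z.1 + f₁ b, z.2)) (ν.prod ν) (ν.prod ν) :=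
      (measurePreserving_add_right ν (f₁ b)).skew_product (g := fun _ c => c) measurable_snd
        (Filter.Eventually.of_forall fun _ => Measure.map_id)
    have hgb : Continuous (g₁ b) := hg₁.comp (Continuous.prodMk_right b)
    have m2 : MeasurePreserving (fun z : R × R => (z.1, z.2 + g₁ b z.1)) (ν.prod ν) (ν.prod ν) :=
      (MeasurePreserving.id ν).skew_product (g := fun u v => v + g₁ b u)
        (measurable_snd.add (hgb.measurable.comp measurable_fst))
        (Filter.Eventually.of_forall fun u => (measurePreserving_add_right ν (g₁ b u)).map_eq)
    exact m2.comp m1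
  -- the fibrewise map on Fin 2 → R
  let e3 : (Fin 2 → R) ≃ᵐ R × R := MeasurableEquiv.finTwoArrow
  let F : (Fin 3 → R) → (Fin 2 → R) → (Fin 2 → R) := fun b a =>
    e3.symm ((e3 a).1 + f₁ b, (e3 a).2 + g₁ b ((e3 a).1 + f₁ b))
  have mpF : ∀ b, MeasurePreserving (F b)
      (Measure.pi fun _ : Fin 2 => ν) (Measure.pi fun _ : Fin 2 => ν) := by
    intro b
    exact (((measurePreserving_finTwoArrow ν).symm e3).comp (mpH b)).comp
      (measurePreserving_finTwoArrow ν)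
  -- the skew product on (Fin 3 → R) × (Fin 2 → R)
  have hFm : Measurable fun q : (Fin 3 → R) × (Fin 2 → R) => F q.1 q.2 := by
    apply e3.symm.measurable.comp
    have ha0 : Measurable fun q : (Fin 3 → R) × (Fin 2 → R) => (e3 q.2).1 + f₁ q.1 :=
      ((measurable_fst.comp (e3.measurable.comp measurable_snd))).add
        (hf₁.measurable.comp measurable_fst)
    refine Measurable.prodMk ha0 ?_
    refine ((measurable_snd.comp (e3.measurable.comp measurable_snd))).add ?_
    exact (hg₁.measurable.comp (measurable_fst.prodMk ha0))
  have mpΨ : MeasurePreserving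
      (fun q : (Fin 3 → R) × (Fin 2 → R) => (q.1, F q.1 q.2))
      ((Measure.pi fun _ : Fin 3 => ν).prod (Measure.pi fun _ : Fin 2 => ν))
      ((Measure.pi fun _ : Fin 3 => ν).prod (Measure.pi fun _ : Fin 2 => ν)) :=
    (MeasurePreserving.id _).skew_product (g := F) hFm
      (Filter.Eventually.of_forall fun b => (mpF b).map_eq)
  -- reindexing equivalences
  let e1 : (Fin 3 ⊕ Fin 2 → R) ≃ᵐ (Fin 5 → R) :=
    MeasurableEquiv.piCongrLeft (fun _ : Fin 5 => R) (finSumFinEquiv (m := 3) (n := 2))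
  let e2 : (Fin 3 ⊕ Fin 2 → R) ≃ᵐ (Fin 3 → R) × (Fin 2 → R) :=
    MeasurableEquiv.sumPiEquivProdPi (fun _ : Fin 3 ⊕ Fin 2 => R)
  have mp1 : MeasurePreserving e1.symm (Measure.pi fun _ : Fin 5 => ν)
      (Measure.pi fun _ : Fin 3 ⊕ Fin 2 => ν) :=
    (measurePreserving_piCongrLeft (fun _ : Fin 5 => ν) (finSumFinEquiv (m := 3) (n := 2))).symm e1
  have mp2 : MeasurePreserving e2 (Measure.pi fun _ : Fin 3 ⊕ Fin 2 => ν)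
      ((Measure.pi fun _ : Fin 3 => ν).prod (Measure.pi fun _ : Fin 2 => ν)) :=
    measurePreserving_sumPiEquivProdPi (fun _ : Fin 3 ⊕ Fin 2 => ν)
  have mpSnd : MeasurePreserving (Prod.snd : (Fin 3 → R) × (Fin 2 → R) → (Fin 2 → R))
      ((Measure.pi fun _ : Fin 3 => ν).prod (Measure.pi fun _ : Fin 2 => ν))
      (Measure.pi fun _ : Fin 2 => ν) :=
    ⟨measurable_snd, by rw [Measure.map_snd_prod, measure_univ, one_smul]⟩
  have mpφ : MeasurePreserving
      ((Prod.snd : (Fin 3 → R) × (Fin 2 → R) → (Fin 2 → R)) ∘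
        ((fun q : (Fin 3 → R) × (Fin 2 → R) => (q.1, F q.1 q.2)) ∘ (⇑e2 ∘ ⇑e1.symm)))
      (Measure.pi fun _ : Fin 5 => ν) (Measure.pi fun _ : Fin 2 => ν) :=
    mpSnd.comp (mpΨ.comp (mp2.comp mp1))
  -- identify the composite with the explicit map
  have hfun : (fun x : Fin 5 → R =>
        ![Ring.inverse (48 : R) * -((x 0) ^ 2 + 4 * x 1) ^ 2
            + Ring.inverse (2 : R) * (x 0 * x 2 + 2 * x 3),
          Ring.inverse (864 : R) * -((x 0) ^ 2 + 4 * x 1) ^ 3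
            - Ring.inverse (24 : R) * (((x 0) ^ 2 + 4 * x 1) * (x 0 * x 2 + 2 * x 3))
            + Ring.inverse (4 : R) * ((x 2) ^ 2 + 4 * x 4)]) =
      ((Prod.snd : (Fin 3 → R) × (Fin 2 → R) → (Fin 2 → R)) ∘
        ((fun q : (Fin 3 → R) × (Fin 2 → R) => (q.1, F q.1 q.2)) ∘ (⇑e2 ∘ ⇑e1.symm))) := by
    funext x
    have he12 : (e2 (e1.symm x)) =
        (fun i : Fin 3 => x ((finSumFinEquiv (m := 3) (n := 2)) (Sum.inl i)),
         fun j : Fin 2 => x ((finSumFinEquiv (m := 3) (n := 2)) (Sum.inr j))) := by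
      simp [e1, e2, MeasurableEquiv.sumPiEquivProdPi, MeasurableEquiv.piCongrLeft]
    have key : ((Prod.snd : (Fin 3 → R) × (Fin 2 → R) → (Fin 2 → R)) ∘
        ((fun q : (Fin 3 → R) × (Fin 2 → R) => (q.1, F q.1 q.2)) ∘ (⇑e2 ∘ ⇑e1.symm))) x =
        ![x 3 + (i48 * -((x 0) ^ 2 + 4 * x 1) ^ 2 + i2 * (x 0 * x 2)),
          x 4 + (i864 * -((x 0) ^ 2 + 4 * x 1) ^ 3
            - i24 * (((x 0) ^ 2 + 4 * x 1) *
                (2 * (x 3 + (i48 * -((x 0) ^ 2 + 4 * x 1) ^ 2 + i2 * (x 0 * x 2)))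
                  + i24 * ((x 0) ^ 2 + 4 * x 1) ^ 2))
            + i4 * (x 2) ^ 2)] := by
      rw [Function.comp_apply, Function.comp_apply, Function.comp_apply, he12]
      funext i; fin_cases i
      · rfl
      · rfl
    rw [key]
    funext i
    fin_cases i
    · show i48 * -((x 0) ^ 2 + 4 * x 1) ^ 2 + i2 * (x 0 * x 2 + 2 * x 3) =
        x 3 + (i48 * -((x 0) ^ 2 + 4 * x 1) ^ 2 + i2 * (x 0 * x 2))
      linear_combination (x 3) * hi2
    · show i864 * -((x 0) ^ 2 + 4 * x 1) ^ 3
            - i24 * (((x 0) ^ 2 + 4 * x 1) * (x 0 * x 2 + 2 * x 3))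
            + i4 * ((x 2) ^ 2 + 4 * x 4) =
        x 4 +
          (i864 * -((x 0) ^ 2 + 4 * x 1) ^ 3
            - i24 * (((x 0) ^ 2 + 4 * x 1) *
                (2 * (x 3 + (i48 * -((x 0) ^ 2 + 4 * x 1) ^ 2 + i2 * (x 0 * x 2)))
                  + i24 * ((x 0) ^ 2 + 4 * x 1) ^ 2))
            + i4 * (x 2) ^ 2)
      linear_combination (x 4) * hi4 + (i24 * ((x 0) ^ 2 + 4 * x 1) * (x 0) * (x 2)) * hi2
        - (i24 * ((x 0) ^ 2 + 4 * x 1) * ((x 0) ^ 2 + 4 * x 1) ^ 2) * hC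
  -- conclude
  rw [hμ₅, hμ₂, hfun]
  exact mpφ.measure_preimage hU.measurableSet.nullMeasurableSet
end

section
/- Assume p ≥ 5. Let N be a nonnegative integer and a4, a6 ∈ R_P. Suppose n1 ∈ R_P satisfies v_P(n1) = 1, v_P(a4 + 3n1²) ≥ ⌊(N+6)/2⌋ and v_P(n1³ + n1·a4 + a6) ≥ N + 4. Then an element n2 ∈ R_P satisfies v_P(n2) = 1, v_P(a4 + 3n2²) ≥ ⌊(N+6)/2⌋ and v_P(n2³ + n2·a4 + a6) ≥ N + 4 if and only if v_P(n1 − n2) ≥ ⌊(N+4)/2⌋. -/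
/-- Assume `p ≥ 5`. Let `N ≥ 0` and `a₄, a₆ ∈ R_P`. Suppose `n₁ ∈ R_P`
satisfies `v_P(n₁) = 1`, `v_P(a₄ + 3n₁²) ≥ ⌊(N+6)/2⌋` and `v_P(n₁³ + n₁a₄ + a₆) ≥ N + 4`.
Then `n₂ ∈ R_P` satisfies `v_P(n₂) = 1`, `v_P(a₄ + 3n₂²) ≥ ⌊(N+6)/2⌋` and
`v_P(n₂³ + n₂a₄ + a₆) ≥ N + 4` if and only if `v_P(n₁ − n₂) ≥ ⌊(N+4)/2⌋`.
Valuation conditions are expressed via divisibility by powers of the uniformizer `π`. -/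
theorem stmt_5 {R : Type*} [CommRing R] [IsDomain R] [IsDiscreteValuationRing R]
    (p : ℕ) (hp : p.Prime) (hp5 : 5 ≤ p) [CharP R p]
    (π : R) (hπ : Irreducible π) (N : ℕ) (a₄ a₆ n₁ n₂ : R)
    (h₁ : π ∣ n₁) (h₁' : ¬ π ^ 2 ∣ n₁)
    (h₂ : π ^ ((N + 6) / 2) ∣ a₄ + 3 * n₁ ^ 2)
    (h₃ : π ^ (N + 4) ∣ n₁ ^ 3 + n₁ * a₄ + a₆) :
    (π ∣ n₂ ∧ ¬ π ^ 2 ∣ n₂ ∧ π ^ ((N + 6) / 2) ∣ a₄ + 3 * n₂ ^ 2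
        ∧ π ^ (N + 4) ∣ n₂ ^ 3 + n₂ * a₄ + a₆)
      ↔ π ^ ((N + 4) / 2) ∣ n₁ - n₂ := by
  have hch : ringChar R = p := ringChar.eq R p
  have hchne : ringChar R ≠ 0 := by omega
  have hu2 : IsUnit (2 : R) := by
    haveI : Fact (Nat.Prime 2) := ⟨Nat.prime_two⟩
    have h := (isUnit_iff_not_dvd_char_of_ringChar_ne_zero R 2 hchne).mpr ?_
    · simpa using h
    · rw [hch]
      intro hdvd
      rcases hp.eq_one_or_self_of_dvd 2 hdvd with h | h <;> omega
  have hu3 : IsUnit (3 : R) := by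
    haveI : Fact (Nat.Prime 3) := ⟨Nat.prime_three⟩
    have h := (isUnit_iff_not_dvd_char_of_ringChar_ne_zero R 3 hchne).mpr ?_
    · simpa using h
    · rw [hch]
      intro hdvd
      rcases hp.eq_one_or_self_of_dvd 3 hdvd with h | h <;> omega
  set m := (N + 4) / 2 with hm
  have hM : (N + 6) / 2 = m + 1 := by omega
  have hm2 : 2 ≤ m := by omega
  have hN4 : N + 4 ≤ 2 * m + 1 := by omega
  rw [hM] at h₂ ⊢
  have hπ0 : (π : R) ≠ 0 := hπ.ne_zero
  constructor
  · rintro ⟨k₁, k₂, k₃, k₄⟩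
    by_contra hd
    have hdπ : π ∣ n₁ - n₂ := dvd_sub h₁ k₁
    have hdne : n₁ - n₂ ≠ 0 := by
      intro h0; exact hd (h0 ▸ dvd_zero _)
    obtain ⟨k, u, hdu⟩ := IsDiscreteValuationRing.eq_unit_mul_pow_irreducible hdne hπ
    have hk1 : 1 ≤ k := by
      rcases Nat.eq_zero_or_pos k with h0 | h
      · exfalso
        rw [hdu, h0, pow_zero, mul_one] at hdπ
        exact hπ.not_isUnit (isUnit_of_dvd_unit hdπ u.isUnit)
      · exact h
    have hkm : k < m := by
      by_contra hkm
      push_neg at hkm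
      exact hd (hdu ▸ Dvd.dvd.mul_left (pow_dvd_pow π hkm) _)
    -- Step 1 : π² ∣ n₁ + n₂
    have key : π ^ (m + 1) ∣ 3 * ((n₁ + n₂) * (n₁ - n₂)) := by
      have h := dvd_sub h₂ k₃
      have e : (a₄ + 3 * n₁ ^ 2) - (a₄ + 3 * n₂ ^ 2) = 3 * ((n₁ + n₂) * (n₁ - n₂)) := by ring
      rwa [e] at h
    have key2 : π ^ (m + 1) ∣ (n₁ + n₂) * (n₁ - n₂) := (hu3.dvd_mul_left).mp key
    have hs2 : π ^ 2 ∣ n₁ + n₂ := by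
      rw [hdu] at key2
      have e1 : (n₁ + n₂) * (↑u * π ^ k) = ((n₁ + n₂) * ↑u) * π ^ k := by ring
      rw [e1] at key2
      have e2 : π ^ (m + 1) = π ^ (m + 1 - k) * π ^ k := by
        rw [← pow_add]; congr 1; omega
      rw [e2] at key2
      have h' : π ^ (m + 1 - k) ∣ (n₁ + n₂) * ↑u :=
        (mul_dvd_mul_iff_right (pow_ne_zero k hπ0)).mp key2
      have h'' : π ^ 2 ∣ (n₁ + n₂) * ↑u := (pow_dvd_pow π (by omega)).trans h'
      exact Units.dvd_mul_right.mp h''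
    -- Step 2 : k = 1
    have hd2 : ¬ π ^ 2 ∣ n₁ - n₂ := by
      intro h2d
      have h2n : π ^ 2 ∣ 2 * n₁ := by
        have e : 2 * n₁ = (n₁ - n₂) + (n₁ + n₂) := by ring
        rw [e]; exact dvd_add h2d hs2
      exact h₁' ((hu2.dvd_mul_left).mp h2n)
    have hk : k = 1 := by
      by_contra hk
      exact hd2 (hdu ▸ Dvd.dvd.mul_left (pow_dvd_pow π (by omega : 2 ≤ k)) _)
    -- n₁ + 2n₂ : valuation exactly 1
    have hπ12 : π ∣ n₁ + n₂ := (dvd_pow_self π (by norm_num : (2:ℕ) ≠ 0)).trans hs2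
    have he1 : π ∣ n₁ + 2 * n₂ := by
      have e : n₁ + 2 * n₂ = (n₁ + n₂) + n₂ := by ring
      rw [e]; exact dvd_add hπ12 k₁
    have he2 : ¬ π ^ 2 ∣ n₁ + 2 * n₂ := by
      intro h
      apply k₂
      have e : n₂ = (n₁ + 2 * n₂) - (n₁ + n₂) := by ring
      rw [e]; exact dvd_sub h hs2
    obtain ⟨e, hee⟩ := he1
    have hπe : ¬ π ∣ e := by
      intro ⟨c, hc⟩
      exact he2 ⟨c, by rw [hee, hc]; ring⟩
    -- contradiction via the cubic
    have hf : π ^ 4 ∣ (n₁ - n₂) * (n₁ ^ 2 + n₁ * n₂ + n₂ ^ 2 + a₄) := by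
      have h := dvd_sub h₃ k₄
      have e' : (n₁ ^ 3 + n₁ * a₄ + a₆) - (n₂ ^ 3 + n₂ * a₄ + a₆)
          = (n₁ - n₂) * (n₁ ^ 2 + n₁ * n₂ + n₂ ^ 2 + a₄) := by ring
      rw [e'] at h
      exact (pow_dvd_pow π (by omega : 4 ≤ N + 4)).trans h
    have hf1 : π ^ 4 ∣ (n₁ - n₂) * (a₄ + 3 * n₂ ^ 2) := by
      have e2 : π ^ 4 = (π * π ^ 2) * π := by ring
      have h3 : π ^ 3 ∣ a₄ + 3 * n₂ ^ 2 := (pow_dvd_pow π (by omega : 3 ≤ m + 1)).trans k₃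
      calc π ^ 4 = π ^ 1 * π ^ 3 := by ring
        _ ∣ (n₁ - n₂) * (a₄ + 3 * n₂ ^ 2) := mul_dvd_mul (by simpa using hdπ) h3
    have hf2 : π ^ 4 ∣ (n₁ - n₂) ^ 2 * (n₁ + 2 * n₂) := by
      have e' : (n₁ - n₂) ^ 2 * (n₁ + 2 * n₂)
          = (n₁ - n₂) * (n₁ ^ 2 + n₁ * n₂ + n₂ ^ 2 + a₄) - (n₁ - n₂) * (a₄ + 3 * n₂ ^ 2) := by
        ring
      rw [e']; exact dvd_sub hf hf1
    rw [hdu, hk, hee] at hf2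
    have e3 : (↑u * π ^ 1) ^ 2 * (π * e) = (↑u ^ 2 * e) * π ^ 3 := by ring
    rw [e3] at hf2
    have e4 : π ^ 4 = π * π ^ 3 := by ring
    rw [e4] at hf2
    have h5 : π ∣ ↑u ^ 2 * e := (mul_dvd_mul_iff_right (pow_ne_zero 3 hπ0)).mp hf2
    rcases hπ.prime.dvd_mul.mp h5 with h | h
    · exact hπ.not_isUnit (isUnit_of_dvd_unit h (u.isUnit.pow 2))
    · exact hπe h
  · intro hd
    have hπd : π ∣ n₁ - n₂ := (dvd_pow_self π (by omega : m ≠ 0)).trans hd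
    have hπn₂ : π ∣ n₂ := by
      have e : n₂ = n₁ - (n₁ - n₂) := by ring
      rw [e]; exact dvd_sub h₁ hπd
    refine ⟨hπn₂, ?_, ?_, ?_⟩
    · intro h2
      apply h₁'
      have e : n₁ = n₂ + (n₁ - n₂) := by ring
      rw [e]; exact dvd_add h2 ((pow_dvd_pow π hm2).trans hd)
    · have e : a₄ + 3 * n₂ ^ 2 = (a₄ + 3 * n₁ ^ 2) - 3 * ((n₁ + n₂) * (n₁ - n₂)) := by ring
      rw [e]
      refine dvd_sub h₂ (Dvd.dvd.mul_left ?_ 3)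
      calc π ^ (m + 1) = π * π ^ m := by rw [pow_succ]; ring
        _ ∣ (n₁ + n₂) * (n₁ - n₂) := mul_dvd_mul (dvd_add h₁ hπn₂) hd
    · have e : n₂ ^ 3 + n₂ * a₄ + a₆
          = (n₁ ^ 3 + n₁ * a₄ + a₆)
            - (n₁ - n₂) * ((a₄ + 3 * n₁ ^ 2) - (n₁ - n₂) * (2 * n₁ + n₂)) := by ring
      rw [e]
      refine dvd_sub h₃ ?_
      refine (pow_dvd_pow π hN4).trans ?_
      have e2 : π ^ (2 * m + 1) = π ^ m * π ^ (m + 1) := by rw [← pow_add]; congr 1; omega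
      rw [e2]
      refine mul_dvd_mul hd (dvd_sub h₂ ?_)
      calc π ^ (m + 1) = π ^ m * π := by rw [pow_succ]
        _ ∣ (n₁ - n₂) * (2 * n₁ + n₂) :=
          mul_dvd_mul hd (dvd_add (Dvd.dvd.mul_left h₁ 2) hπn₂)
end

section
/- Assume p ≥ 5 and let N be a positive integer. The μ_P-measure of the set of pairs (a,b) ∈ R_P^2 such that v_P(a) = 0, v_P(b) = 0 and v_P(4a³ + 27b²) ≥ N equals (Q_P − 1)/Q_P^{N+1}. -/
open MeasureTheory
open scoped ENNReal

private lemma aux_fiber_card {G H : Type*} [AddCommGroup G] [AddCommGroup H] (f : G →+ H)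
    {c : H} (x₀ : G) (hx₀ : f x₀ = c) :
    Nat.card {x // f x = c} = Nat.card {x // f x = 0} := by
  apply Nat.card_congr
  refine ⟨fun y => ⟨y.1 - x₀, by simp [map_sub, y.2, hx₀]⟩,
    fun y => ⟨y.1 + x₀, by simp [map_add, y.2, hx₀]⟩,
    fun y => by ext; simp, fun y => by ext; simp⟩

private lemma aux_card_eq_mul {G H : Type*} [AddCommGroup G] [AddCommGroup H] [Finite G]
    (f : G →+ H) (hf : Function.Surjective f) :
    Nat.card G = Nat.card H * Nat.card {x // f x = 0} := by
  have : Finite H := Finite.of_surjective f hf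
  have := Fintype.ofFinite G
  have := Fintype.ofFinite H
  classical
  rw [← Nat.card_congr (Equiv.sigmaFiberEquiv f)]
  rw [Nat.card_eq_fintype_card, Fintype.card_sigma]
  have key : ∀ c : H, Fintype.card {x // f x = c} = Nat.card {x // f x = 0} := fun c => by
    rw [← Nat.card_eq_fintype_card]
    obtain ⟨x₀, hx₀⟩ := hf c
    exact aux_fiber_card f x₀ hx₀
  simp only [key]
  rw [Finset.sum_const, Finset.card_univ, smul_eq_mul]
  simp [Nat.card_eq_fintype_card]

private lemma aux_isUnit_nat {R : Type*} [CommRing R] (p : ℕ) (hp : p.Prime) [CharP R p]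
    (n : ℕ) (h : ¬ p ∣ n) : IsUnit ((n : ℕ) : R) := by
  have h1 : Nat.gcd p n = 1 := (Nat.Prime.coprime_iff_not_dvd hp).mpr h
  have h2 := Nat.gcd_eq_gcd_ab p n
  rw [h1] at h2
  refine IsUnit.of_mul_eq_one ((Nat.gcdB p n : ℤ) : R) ?_
  have h3 : ((1 : ℤ) : R) = ((p * Nat.gcdA p n + n * Nat.gcdB p n : ℤ) : R) := by
    rw [← h2]; norm_num
  push_cast at h3
  rw [CharP.cast_eq_zero R p] at h3
  simpa using h3.symm


private lemma aux_count_T {A : Type*} [CommRing A] (h4 : IsUnit (4:A)) (h27 : IsUnit (27:A)) :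
    Nat.card {y : Fin 2 → A // IsUnit (y 0) ∧ IsUnit (y 1) ∧ 4*(y 0)^3 + 27*(y 1)^2 = 0}
      = Nat.card {u : A // IsUnit u} := by
  set d : A := ↑(h4.unit⁻¹) with hddef
  have hdu : IsUnit d := Units.isUnit _
  have hd : (4:A) * d = 1 := by
    conv_lhs => rw [← h4.unit_spec]
    exact h4.unit.mul_inv
  symm
  apply Nat.card_congr
  refine Equiv.ofBijective (fun u => ⟨![-27*d*u.1^2, -27*d*u.1^3], ?_, ?_, ?_⟩) ⟨?_, ?_⟩
  · simp only [Matrix.cons_val_zero]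
    exact (h27.neg.mul hdu).mul (u.2.pow 2)
  · simp only [Matrix.cons_val_one, Matrix.head_cons]
    exact (h27.neg.mul hdu).mul (u.2.pow 3)
  · simp only [Matrix.cons_val_zero, Matrix.cons_val_one, Matrix.head_cons]
    linear_combination (-19683 * d^2 * u.1^6 : A) * hd
  · rintro u v huv
    have h0 := congrFun (congrArg Subtype.val huv) 0
    have h1 := congrFun (congrArg Subtype.val huv) 1
    simp only [Matrix.cons_val_zero, Matrix.cons_val_one, Matrix.head_cons] at h0 h1
    have hcu : IsUnit ((-27) * d : A) := h27.neg.mul hdu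
    have hsq : u.1^2 = v.1^2 := hcu.mul_left_cancel h0
    have hcb : u.1^3 = v.1^3 := hcu.mul_left_cancel h1
    have hkey : u.1 * u.1^2 = v.1 * u.1^2 := by
      linear_combination hcb - v.1 * hsq
    exact Subtype.ext ((u.2.pow 2).mul_right_cancel hkey)
  · rintro ⟨y, hy0, hy1, heq⟩
    set s := y 0 with hsdef
    set t := y 1 with htdef
    set s' : A := ↑(hy0.unit⁻¹) with hs'def
    have hs' : s * s' = 1 := by
      conv_lhs => rw [← hy0.unit_spec]
      exact hy0.unit.mul_inv
    refine ⟨⟨t * s', hy1.mul (Units.isUnit _)⟩, ?_⟩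
    apply Subtype.ext
    funext i
    fin_cases i
    · simp only [Fin.mk_zero, Fin.mk_one, Matrix.cons_val_zero]
      linear_combination (-d * s'^2 : A) * heq + (s * (s*s'+1)) * hs' + (s^3*s'^2) * hd
    · simp only [Fin.mk_zero, Fin.mk_one, Matrix.cons_val_one, Matrix.head_cons, Matrix.cons_val_zero]
      linear_combination (-d * t * s'^3 : A) * heq + (t*((s*s')^2+s*s'+1)) * hs' + (t*s^3*s'^3) * hd

/-- Assume `p ≥ 5` and let `N ≥ 1`. The normalized Haar measure of the set
of pairs `(a, b) ∈ R_P^2` with `v_P(a) = 0`, `v_P(b) = 0` and `v_P(4a³ + 27b²) ≥ N` equals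
`(Q_P − 1)/Q_P^{N+1}`, where `Q_P` is the cardinality of the residue field. -/
theorem stmt_6 {R : Type*} [CommRing R] [IsDomain R] [IsDiscreteValuationRing R]
    [TopologicalSpace R] [IsTopologicalRing R] [CompactSpace R]
    [MeasurableSpace R] [BorelSpace R]
    (hadic : IsAdic (IsLocalRing.maximalIdeal R))
    [Finite (IsLocalRing.ResidueField R)]
    (Q : ℕ) (hQ : Nat.card (IsLocalRing.ResidueField R) = Q)
    (p : ℕ) (hp : p.Prime) (hp5 : 5 ≤ p) [CharP R p]
    (π : R) (hπ : Irreducible π) (N : ℕ) (hN : 0 < N)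
    (μ : Measure (Fin 2 → R)) [μ.IsAddHaarMeasure] [IsProbabilityMeasure μ] [μ.Regular] :
    μ {x : Fin 2 → R | ¬ π ∣ x 0 ∧ ¬ π ∣ x 1 ∧ π ^ N ∣ 4 * (x 0) ^ 3 + 27 * (x 1) ^ 2}
      = ((Q : ℝ≥0∞) - 1) / (Q : ℝ≥0∞) ^ (N + 1) := by
  classical
  have hQ2 : 2 ≤ Q := by
    rw [← hQ]
    exact (Finite.one_lt_card_iff_nontrivial).mpr inferInstance
  have hQ0 : Q ≠ 0 := by omega
  set I : Ideal R := Ideal.span {π ^ N} with hIdef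
  have hI : I = (IsLocalRing.maximalIdeal R) ^ N := by
    rw [hπ.maximalIdeal_eq, Ideal.span_singleton_pow]
  have hcardA : Nat.card (R ⧸ I) = Q ^ N := by
    have h1 : Nat.card (R ⧸ I) = Submodule.cardQuot I := (Submodule.cardQuot_apply I).symm
    have h2 : Submodule.cardQuot (IsLocalRing.maximalIdeal R) = Q := by
      rw [Submodule.cardQuot_apply]; exact hQ
    rw [h1, hI, cardQuot_pow_of_prime (IsDiscreteValuationRing.not_a_field R), h2]
  have hAfin : Finite (R ⧸ I) := Nat.finite_of_card_ne_zero (by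
    rw [hcardA]; exact pow_ne_zero N hQ0)
  -- units in the quotient
  have hmk_unit : ∀ x : R, IsUnit (Ideal.Quotient.mk I x) ↔ ¬ π ∣ x := by
    intro x
    constructor
    · rintro hx hdvd
      obtain ⟨y, hy⟩ := hx.exists_right_inv
      obtain ⟨y', rfl⟩ := Ideal.Quotient.mk_surjective y
      have h1 : x * y' - 1 ∈ I := by
        rw [← Ideal.Quotient.eq_zero_iff_mem, map_sub, map_mul, map_one, hy, sub_self]
      have h2 : π ∣ x * y' - 1 :=
        dvd_trans (dvd_pow_self π hN.ne') (Ideal.mem_span_singleton.mp h1)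
      have h3 : π ∣ (1 : R) := by
        have := dvd_sub (hdvd.mul_right y') h2
        simpa using this
      exact hπ.not_isUnit (isUnit_of_dvd_one h3)
    · intro hdvd
      have hxu : IsUnit x := by
        by_contra hxu
        apply hdvd
        have hx : x ∈ IsLocalRing.maximalIdeal R := by
          rw [IsLocalRing.mem_maximalIdeal]; exact hxu
        rwa [hπ.maximalIdeal_eq, Ideal.mem_span_singleton] at hx
      exact hxu.map _
  -- the factor map to the residue field and counting units
  have hle : I ≤ IsLocalRing.maximalIdeal R := by rw [hI]; exact Ideal.pow_le_self hN.ne'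
  set g : (R ⧸ I) →+* (R ⧸ IsLocalRing.maximalIdeal R) :=
    Ideal.Quotient.factor hle with hgdef
  have hg_surj : Function.Surjective g := fun y => by
    obtain ⟨x, rfl⟩ := Ideal.Quotient.mk_surjective y
    exact ⟨Ideal.Quotient.mk I x, Ideal.Quotient.factor_mk hle x⟩
  have hg_zero : ∀ x : R, g (Ideal.Quotient.mk I x) = 0 ↔ π ∣ x := fun x => by
    rw [hgdef, Ideal.Quotient.factor_mk, Ideal.Quotient.eq_zero_iff_mem, hπ.maximalIdeal_eq,
      Ideal.mem_span_singleton]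
  have hQM : Nat.card (R ⧸ IsLocalRing.maximalIdeal R) = Q := hQ
  have hker : Nat.card {a : R ⧸ I // g a = 0} = Q ^ (N - 1) := by
    have h := aux_card_eq_mul g.toAddMonoidHom hg_surj
    simp only [RingHom.toAddMonoidHom_eq_coe, AddMonoidHom.coe_coe] at h
    rw [hcardA, hQM] at h
    have hNpow : Q ^ N = Q * Q ^ (N - 1) := by
      rw [← pow_succ']; congr 1; omega
    rw [hNpow] at h
    exact (Nat.eq_of_mul_eq_mul_left (by omega) h.symm)
  have hcompl : Nat.card {a : R ⧸ I // ¬ IsUnit a} = Q ^ (N - 1) := by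
    rw [← hker]
    apply Nat.card_congr
    apply Equiv.subtypeEquivRight
    intro a
    obtain ⟨x, rfl⟩ := Ideal.Quotient.mk_surjective a
    rw [hmk_unit, hg_zero, not_not]
  have hsum : Nat.card {a : R ⧸ I // IsUnit a} + Nat.card {a : R ⧸ I // ¬ IsUnit a} = Q ^ N := by
    rw [← hcardA, ← Nat.card_sum]
    exact Nat.card_congr (Equiv.sumCompl _)
  -- units 4 and 27 in the quotient
  have h2R : IsUnit ((2:ℕ) : R) := aux_isUnit_nat p hp 2 (fun hdvd => by
    have := Nat.le_of_dvd (by norm_num) hdvd; omega)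
  have h3R : IsUnit ((3:ℕ) : R) := aux_isUnit_nat p hp 3 (fun hdvd => by
    have := Nat.le_of_dvd (by norm_num) hdvd; omega)
  have h2A : IsUnit ((2:ℕ) : R ⧸ I) := by
    have := h2R.map (Ideal.Quotient.mk I); rwa [map_natCast] at this
  have h3A : IsUnit ((3:ℕ) : R ⧸ I) := by
    have := h3R.map (Ideal.Quotient.mk I); rwa [map_natCast] at this
  have h4 : IsUnit (4 : R ⧸ I) := by
    have := h2A.pow 2
    norm_num at this
    exact this
  have h27 : IsUnit (27 : R ⧸ I) := by
    have := h3A.pow 3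
    norm_num at this
    exact this
  -- cardinality of the solution set in the quotient
  have hcardT : Nat.card {y : Fin 2 → R ⧸ I //
      IsUnit (y 0) ∧ IsUnit (y 1) ∧ 4*(y 0)^3 + 27*(y 1)^2 = 0} + Q ^ (N-1) = Q ^ N := by
    rw [aux_count_T h4 h27]
    rw [← hcompl]
    exact hsum
  -- the reduction map on pairs
  set Φ : (Fin 2 → R) → (Fin 2 → R ⧸ I) := fun x i => Ideal.Quotient.mk I (x i) with hΦdef
  have hΦsurj : Function.Surjective Φ := fun c =>
    ⟨fun i => (Ideal.Quotient.mk_surjective (c i)).choose,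
      funext fun i => (Ideal.Quotient.mk_surjective (c i)).choose_spec⟩
  set T : Set (Fin 2 → R ⧸ I) :=
    {y | IsUnit (y 0) ∧ IsUnit (y 1) ∧ 4*(y 0)^3 + 27*(y 1)^2 = 0} with hTdef
  have hSeq : {x : Fin 2 → R | ¬ π ∣ x 0 ∧ ¬ π ∣ x 1 ∧ π ^ N ∣ 4 * (x 0) ^ 3 + 27 * (x 1) ^ 2}
      = Φ ⁻¹' T := by
    have hdvd : ∀ z : R, π ^ N ∣ z ↔ Ideal.Quotient.mk I z = 0 := fun z => by
      rw [Ideal.Quotient.eq_zero_iff_mem, hIdef, Ideal.mem_span_singleton]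
    ext x
    simp only [Set.mem_setOf_eq, Set.mem_preimage, hTdef, hΦdef]
    rw [hmk_unit, hmk_unit, hdvd]
    have : Ideal.Quotient.mk I (4 * (x 0) ^ 3 + 27 * (x 1) ^ 2)
        = 4 * (Ideal.Quotient.mk I (x 0)) ^ 3 + 27 * (Ideal.Quotient.mk I (x 1)) ^ 2 := by
      simp only [map_add, map_mul, map_pow, map_ofNat]
    rw [this]
  -- fibers of Φ are measurable
  have hMopen : IsOpen ((I : Set R)) := by
    rw [hI]; exact (isAdic_iff.mp hadic).1 N
  have hcoset_open : ∀ a : R ⧸ I, IsOpen {r : R | Ideal.Quotient.mk I r = a} := by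
    intro a
    obtain ⟨r₀, rfl⟩ := Ideal.Quotient.mk_surjective a
    have : {r : R | Ideal.Quotient.mk I r = Ideal.Quotient.mk I r₀}
        = (fun r => r - r₀) ⁻¹' (I : Set R) := by
      ext r
      simp only [Set.mem_setOf_eq, Set.mem_preimage, SetLike.mem_coe]
      exact Ideal.Quotient.eq
    rw [this]
    exact hMopen.preimage (continuous_id.sub continuous_const)
  have hfib_pi : ∀ c : Fin 2 → R ⧸ I,
      Φ ⁻¹' {c} = Set.pi Set.univ (fun i => {r : R | Ideal.Quotient.mk I r = c i}) := by
    intro c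
    ext x
    simp only [Set.mem_preimage, Set.mem_singleton_iff, Set.mem_pi, Set.mem_univ, true_implies,
      Set.mem_setOf_eq, hΦdef, funext_iff]
  have hfib_meas : ∀ c : Fin 2 → R ⧸ I, MeasurableSet (Φ ⁻¹' {c}) := fun c => by
    rw [hfib_pi]
    exact MeasurableSet.univ_pi fun i => (hcoset_open (c i)).measurableSet
  -- all fibers have the same measure
  have hfib_measure : ∀ c : Fin 2 → R ⧸ I, μ (Φ ⁻¹' {c}) = μ (Φ ⁻¹' {0}) := by
    intro c
    obtain ⟨x₀, rfl⟩ := hΦsurj c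
    have hset : Φ ⁻¹' {Φ x₀} = (fun x => -x₀ + x) ⁻¹' (Φ ⁻¹' {0}) := by
      ext x
      simp only [Set.mem_preimage, Set.mem_singleton_iff, funext_iff, hΦdef, Pi.add_apply,
        Pi.neg_apply, Pi.zero_apply]
      refine forall_congr' fun i => ?_
      rw [map_add, map_neg, neg_add_eq_zero, eq_comm]
    have haddmeas : Measurable (fun x : Fin 2 → R => -x₀ + x) := by
      apply measurable_pi_iff.mpr
      intro i
      have hfun : (fun x : Fin 2 → R => (-x₀ + x) i) = fun x => (-(x₀ i)) + x i := by
        funext x; simp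
      rw [hfun]
      exact (measurable_pi_apply i).const_add _
    rw [hset, ← Measure.map_apply haddmeas (hfib_meas 0),
      MeasureTheory.map_add_left_eq_self μ (-x₀)]
  -- total measure computation
  haveI : Fintype (R ⧸ I) := Fintype.ofFinite _
  haveI : Fintype ↥T := Fintype.ofFinite _
  have hdisj : Pairwise (Function.onFun Disjoint fun c : Fin 2 → R ⧸ I => Φ ⁻¹' {c}) := by
    intro c c' hne
    refine Set.disjoint_left.mpr fun x hx hx' => hne ?_
    simp only [Set.mem_preimage, Set.mem_singleton_iff] at hx hx'
    rw [← hx, ← hx']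
  have hunion : ⋃ c : Fin 2 → R ⧸ I, Φ ⁻¹' {c} = Set.univ := by
    ext x
    simp only [Set.mem_iUnion, Set.mem_preimage, Set.mem_singleton_iff, Set.mem_univ, iff_true]
    exact ⟨Φ x, rfl⟩
  have hcard2 : Nat.card (Fin 2) = 2 := by simp
  have hcardB : Nat.card (Fin 2 → R ⧸ I) = Q ^ (2 * N) := by
    rw [Nat.card_fun, hcardA, hcard2, ← pow_mul, Nat.mul_comm N 2]
  have htot : (Q : ℝ≥0∞) ^ (2 * N) * μ (Φ ⁻¹' {0}) = 1 := by
    have h1 := measure_iUnion (μ := μ) hdisj hfib_meas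
    rw [hunion, measure_univ] at h1
    have h2 : ∑' c : Fin 2 → R ⧸ I, μ (Φ ⁻¹' {c})
        = ∑' _ : Fin 2 → R ⧸ I, μ (Φ ⁻¹' {0}) := tsum_congr fun c => hfib_measure c
    rw [h2, tsum_fintype, Finset.sum_const, Finset.card_univ, nsmul_eq_mul,
      ← Nat.card_eq_fintype_card, hcardB] at h1
    rw [← Nat.cast_pow]
    exact h1.symm
  have hQe0 : (Q:ℝ≥0∞) ≠ 0 := by exact_mod_cast hQ0
  have hQet : (Q:ℝ≥0∞) ≠ ⊤ := ENNReal.natCast_ne_top Q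
  have hμK : μ (Φ ⁻¹' {0}) = ((Q : ℝ≥0∞) ^ (2 * N))⁻¹ := by
    have hq0 : ((Q:ℝ≥0∞) ^ (2*N)) ≠ 0 := pow_ne_zero _ hQe0
    have hqt : ((Q:ℝ≥0∞) ^ (2*N)) ≠ ⊤ := ENNReal.pow_ne_top hQet
    calc μ (Φ ⁻¹' {0}) = ((Q:ℝ≥0∞)^(2*N))⁻¹ * ((Q:ℝ≥0∞)^(2*N) * μ (Φ ⁻¹' {0})) := by
          rw [← mul_assoc, ENNReal.inv_mul_cancel hq0 hqt, one_mul]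
      _ = ((Q:ℝ≥0∞)^(2*N))⁻¹ := by rw [htot, mul_one]
  have hSunion : Φ ⁻¹' T = ⋃ c : ↥T, Φ ⁻¹' {(c : Fin 2 → R ⧸ I)} := by
    rw [← Set.preimage_iUnion, Set.iUnion_of_singleton_coe]
  have hμS : μ (Φ ⁻¹' T) = (Nat.card ↥T : ℝ≥0∞) * μ (Φ ⁻¹' {0}) := by
    have hm := measure_iUnion (μ := μ) (f := fun c : ↥T => Φ ⁻¹' {(c : Fin 2 → R ⧸ I)})
      (fun c c' hne => hdisj (Subtype.coe_injective.ne hne)) (fun c => hfib_meas _)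
    rw [hSunion, hm]
    have h2 : ∑' c : ↥T, μ (Φ ⁻¹' {(c : Fin 2 → R ⧸ I)})
        = ∑' _ : ↥T, μ (Φ ⁻¹' {0}) := tsum_congr fun c => hfib_measure _
    rw [h2, tsum_fintype, Finset.sum_const, Finset.card_univ, nsmul_eq_mul,
      Nat.card_eq_fintype_card]
  have hTcard : Nat.card ↥T = Q^(N-1) * (Q - 1) := by
    have h1 : Nat.card ↥T = Nat.card {y : Fin 2 → R ⧸ I //
        IsUnit (y 0) ∧ IsUnit (y 1) ∧ 4*(y 0)^3 + 27*(y 1)^2 = 0} := rfl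
    have h2 : Q^(N-1) * (Q-1) + Q^(N-1) = Q^N := by
      have h3 : Q^(N-1) * Q = Q^N := by rw [← pow_succ, Nat.sub_add_cancel hN]
      calc Q^(N-1)*(Q-1) + Q^(N-1) = Q^(N-1) * ((Q-1)+1) := by ring
        _ = Q^(N-1) * Q := by rw [Nat.sub_add_cancel (le_trans one_le_two hQ2)]
        _ = Q^N := h3
    have h4' : Nat.card ↥T + Q^(N-1) = Q^(N-1) * (Q-1) + Q^(N-1) := by
      rw [h2, h1]; exact hcardT
    exact Nat.add_right_cancel h4'
  rw [hSeq, hμS, hμK, hTcard]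
  have hcast : ((Q^(N-1) * (Q-1) : ℕ) : ℝ≥0∞) = (Q:ℝ≥0∞)^(N-1) * ((Q:ℝ≥0∞) - 1) := by
    rw [Nat.cast_mul, Nat.cast_pow, ENNReal.natCast_sub, Nat.cast_one]
  have hsplit : (Q:ℝ≥0∞)^(2*N) = (Q:ℝ≥0∞)^(N-1) * (Q:ℝ≥0∞)^(N+1) := by
    obtain ⟨M, hMN⟩ := Nat.exists_eq_add_of_le hN
    subst hMN
    have he : 1 + M - 1 + (1 + M + 1) = 2 * (1 + M) := by
      rw [Nat.add_sub_cancel_left]; ring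
    rw [← pow_add, he]
  rw [hcast, hsplit, ENNReal.mul_inv (Or.inl (pow_ne_zero _ hQe0))
    (Or.inl (ENNReal.pow_ne_top hQet)), div_eq_mul_inv]
  calc (Q:ℝ≥0∞)^(N-1) * ((Q:ℝ≥0∞)-1) * (((Q:ℝ≥0∞)^(N-1))⁻¹ * ((Q:ℝ≥0∞)^(N+1))⁻¹)
      = ((Q:ℝ≥0∞)^(N-1) * ((Q:ℝ≥0∞)^(N-1))⁻¹) * (((Q:ℝ≥0∞)-1) * ((Q:ℝ≥0∞)^(N+1))⁻¹) := by
        ring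
    _ = ((Q:ℝ≥0∞)-1) * ((Q:ℝ≥0∞)^(N+1))⁻¹ := by
        rw [ENNReal.mul_inv_cancel (pow_ne_zero _ hQe0) (ENNReal.pow_ne_top hQet), one_mul]
end

section
/- Assume p ≥ 5 and let N be a positive integer. The number of pairs (a,b) of units of the quotient ring R_P/π_P^N R_P satisfying 4a³ + 27b² = 0 in R_P/π_P^N R_P equals Q_P^N − Q_P^{N−1}. -/
open Ideal

private lemma grp_aux {G : Type*} [CommGroup G] (c A B u : G) (n : ℕ) :
    c * (A * B⁻¹) ^ n = u ↔ c * A ^ n = u * B ^ n := by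
  rw [mul_pow, inv_pow, ← mul_assoc, mul_inv_eq_iff_eq_mul]

/-- Assume `p ≥ 5` and let `N ≥ 1`. The number of pairs `(a, b)` of units of
the quotient ring `R_P/π_P^N R_P` satisfying `4a³ + 27b² = 0` in `R_P/π_P^N R_P` equals
`Q_P^N − Q_P^{N−1}`, where `Q_P` is the cardinality of the residue field `R_P/π_P R_P`. -/
theorem stmt_8 {R : Type*} [CommRing R] [IsDomain R] [IsDiscreteValuationRing R]
    (p : ℕ) (hp : p.Prime) (hp5 : 5 ≤ p) [CharP R p]
    (π : R) (hπ : Irreducible π)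
    [Finite (R ⧸ Ideal.span {π})]
    (Q : ℕ) (hQ : Nat.card (R ⧸ Ideal.span {π}) = Q)
    (N : ℕ) (hN : 0 < N) :
    Nat.card {x : (R ⧸ Ideal.span {π ^ N})ˣ × (R ⧸ Ideal.span {π ^ N})ˣ //
        4 * (x.1 : R ⧸ Ideal.span {π ^ N}) ^ 3
          + 27 * (x.2 : R ⧸ Ideal.span {π ^ N}) ^ 2 = 0}
      = Q ^ N - Q ^ (N - 1) := by
  classical
  haveI := Fact.mk hp
  set S := R ⧸ Ideal.span {π ^ N} with hS
  set F := R ⧸ Ideal.span {π} with hF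
  have hπ0 : π ≠ 0 := hπ.ne_zero
  have hπu : ¬ IsUnit π := hπ.not_isUnit
  have hprime : Prime π := UniqueFactorizationMonoid.irreducible_iff_prime.mp hπ
  set I : Ideal R := Ideal.span {π} with hI
  haveI : I.IsPrime := (Ideal.span_singleton_prime hπ0).mpr hprime
  have hIbot : I ≠ ⊥ := by rw [hI, Ne, Ideal.span_singleton_eq_bot]; exact hπ0
  have hItop : I ≠ ⊤ := by simpa [hI, Ideal.span_singleton_eq_top] using hπu
  have hmi : IsLocalRing.maximalIdeal R = I :=
    (IsDiscreteValuationRing.irreducible_iff_uniformizer π).mp hπ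
  -- cardinality of S
  have hIe : Ideal.span {π ^ N} = I ^ N := by rw [hI, Ideal.span_singleton_pow]
  have cardS : Nat.card S = Q ^ N := by
    have h1 : Nat.card S = Nat.card (R ⧸ I ^ N) :=
      Nat.card_congr (Submodule.quotEquivOfEq _ _ hIe).toEquiv
    have h2 := cardQuot_pow_of_prime (P := I) hIbot (i := N)
    rw [Submodule.cardQuot_apply, Submodule.cardQuot_apply] at h2
    rw [h1, h2, hQ]
  have hQpos : 0 < Q := by
    haveI : Nontrivial F := Ideal.Quotient.nontrivial_iff.mpr hItop
    rw [← hQ]; exact Nat.card_pos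
  haveI finS : Finite S := Nat.finite_of_card_ne_zero (by rw [cardS]; exact (pow_pos hQpos N).ne')
  -- the reduction map to the residue field
  have hle : Ideal.span {π ^ N} ≤ I := by
    rw [hI]
    exact Ideal.span_singleton_le_span_singleton.mpr (dvd_pow_self π hN.ne')
  set φ : S →+* F := Ideal.Quotient.factor hle with hφ
  have hsurj : Function.Surjective φ := by
    intro y
    obtain ⟨r, rfl⟩ := Ideal.Quotient.mk_surjective y
    exact ⟨Ideal.Quotient.mk _ r, Ideal.Quotient.factor_mk _ _⟩
  haveI : I.IsMaximal := hmi ▸ IsLocalRing.maximalIdeal.isMaximal R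
  have hcrit : ∀ x : S, IsUnit x ↔ φ x ≠ 0 := by
    intro x
    constructor
    · intro h
      letI : Field F := Ideal.Quotient.field I
      exact (h.map φ).ne_zero
    · intro h
      obtain ⟨r, rfl⟩ := Ideal.Quotient.mk_surjective x
      rw [hφ, Ideal.Quotient.factor_mk] at h
      have hr : IsUnit r := by
        by_contra hr'
        refine h (Ideal.Quotient.eq_zero_iff_mem.mpr ?_)
        show r ∈ I
        rw [← hmi]
        exact (IsLocalRing.mem_maximalIdeal r).mpr hr'
      exact hr.map (Ideal.Quotient.mk _)
  -- cardinality of the kernel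
  set K : Ideal S := RingHom.ker φ with hK
  have cardK : Nat.card K = Q ^ (N - 1) := by
    have h1 : (K.toAddSubgroup).index * Nat.card K.toAddSubgroup = Nat.card S :=
      AddSubgroup.index_mul_card _
    have h2 : (K.toAddSubgroup).index = Q := by
      have e := (RingHom.quotientKerEquivOfSurjective hsurj).toEquiv
      have : Nat.card (S ⧸ K) = Q := by rw [Nat.card_congr e, hQ]
      rw [← this]; rfl
    have h3 : Nat.card K.toAddSubgroup = Nat.card K := rfl
    rw [h2, h3, cardS] at h1
    have hNexp : Q ^ N = Q * Q ^ (N - 1) := by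
      rw [← pow_succ']
      congr 1
      omega
    rw [hNexp] at h1
    exact Nat.eq_of_mul_eq_mul_left hQpos h1
  -- cardinality of units of S
  haveI : Fintype S := Fintype.ofFinite S
  have cardU : Nat.card Sˣ = Q ^ N - Q ^ (N - 1) := by
    have e1 : Sˣ ≃ {x : S // IsUnit x} :=
      Submonoid.unitsTypeEquivIsUnitSubmonoid.toEquiv.trans
        (Equiv.subtypeEquivRight fun x => (IsUnit.mem_submonoid_iff x))
    have e2 : {x : S // IsUnit x} ≃ {x : S // ¬ φ x = 0} :=
      Equiv.subtypeEquivRight fun x => hcrit x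
    have e3 : {x : S // φ x = 0} ≃ K :=
      Equiv.subtypeEquivRight fun x => (RingHom.mem_ker).symm
    rw [Nat.card_congr (e1.trans e2), Nat.card_eq_fintype_card,
      Fintype.card_subtype_compl (fun x : S => φ x = 0)]
    have hc1 : Fintype.card S = Q ^ N := by rw [← Nat.card_eq_fintype_card, cardS]
    have hc2 : Fintype.card {x : S // φ x = 0} = Q ^ (N - 1) := by
      rw [← Nat.card_eq_fintype_card, Nat.card_congr e3, cardK]
    rw [hc1, hc2]
  -- units 2 and 3 in S
  set ψ : ZMod p →+* S := (Ideal.Quotient.mk _).comp (ZMod.castHom dvd_rfl R) with hψ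
  have hunit : ∀ n : ℕ, ¬ p ∣ n → IsUnit ((n : ℕ) : S) := by
    intro n hn
    have h0 : ((n : ℕ) : ZMod p) ≠ 0 := by
      rwa [Ne, ZMod.natCast_eq_zero_iff]
    have hu : IsUnit ((n : ℕ) : ZMod p) := isUnit_iff_ne_zero.mpr h0
    have := hu.map ψ
    rwa [map_natCast] at this
  have hdvd : ∀ n : ℕ, 0 < n → n < 5 → ¬ p ∣ n := by
    intro n hn1 hn2 hd
    have := Nat.le_of_dvd hn1 hd
    omega
  have h2 : IsUnit (2 : S) := by
    have := hunit 2 (hdvd 2 (by norm_num) (by norm_num))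
    simpa using this
  have h3 : IsUnit (3 : S) := by
    have := hunit 3 (hdvd 3 (by norm_num) (by norm_num))
    simpa using this
  obtain ⟨v2, hv2⟩ := h2
  obtain ⟨v3, hv3⟩ := h3
  -- the bijection between units and solutions
  have e : Sˣ ≃ {x : Sˣ × Sˣ // 4 * (x.1 : S) ^ 3 + 27 * (x.2 : S) ^ 2 = 0} := by
    refine ⟨fun u => ⟨(-(v3 * u ^ 2), v2 * u ^ 3), ?_⟩,
      fun x => -(v3 * x.1.2) * (v2 * x.1.1)⁻¹, ?_, ?_⟩
    · simp only [Units.val_neg, Units.val_mul, Units.val_pow_eq_pow_val, hv2, hv3]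
      ring
    · intro u
      rw [mul_inv_eq_iff_eq_mul]
      ext
      simp only [Units.val_neg, Units.val_mul, Units.val_pow_eq_pow_val, hv2, hv3]
      ring
    · rintro ⟨⟨a, b⟩, h⟩
      simp only at h ⊢
      refine Subtype.ext (Prod.ext ?_ ?_) <;> simp only
      · rw [← neg_mul, grp_aux]
        ext
        simp only [Units.val_neg, Units.val_mul, Units.val_pow_eq_pow_val, hv2, hv3]
        linear_combination -h
      · rw [grp_aux]
        ext
        simp only [Units.val_neg, Units.val_mul, Units.val_pow_eq_pow_val, hv2, hv3]
        linear_combination (-2 * (b : S)) * h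
  exact (Nat.card_congr e.symm).trans cardU
end

section
/- Assume p = 3. Define φ : R_P^5 → R_P^3 by φ(a1,a2,a3,a4,a6) = (b2/4, b4/2, b6/4), where b2 = a1² + 4a2, b4 = a1a3 + 2a4, b6 = a3² + 4a6. Then for every open subset U of R_P^3, μ_P(φ^{-1}(U)) = μ_P(U), where the left-hand measure is the normalized Haar measure on K_P^5 and the right-hand one on K_P^3. -/
open MeasureTheory

theorem secondCountable_of_adic_compact {R : Type*} [CommRing R] [TopologicalSpace R]
    [IsTopologicalRing R] [CompactSpace R] (I : Ideal R) (hadic : IsAdic I) :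
    SecondCountableTopology R := by
  obtain ⟨hopen, hbasis⟩ := isAdic_iff.mp hadic
  set C : R → ℕ → Set R := fun x n => (fun y => y - x) ⁻¹' ((I ^ n : Ideal R) : Set R) with hC
  have hCopen : ∀ x n, IsOpen (C x n) :=
    fun x n => (hopen n).preimage (continuous_sub_right x)
  have hmem : ∀ x n, x ∈ C x n := by
    intro x n
    simp [hC]
  have hCeq : ∀ {x a : R} {n : ℕ}, a ∈ C x n → C x n = C a n := by
    intro x a n ha
    simp only [hC, Set.mem_preimage, SetLike.mem_coe] at ha ⊢
    ext z
    simp only [Set.mem_preimage, SetLike.mem_coe]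
    constructor
    · intro hz
      have := sub_mem hz ha
      simpa using this
    · intro hz
      have := add_mem hz ha
      simpa using this
  have hsub : ∀ n : ℕ, ∃ t : Finset R, Set.univ ⊆ ⋃ x ∈ t, C x n := fun n =>
    isCompact_univ.elim_finite_subcover (fun x => C x n) (fun x => hCopen x n)
      (fun y _ => Set.mem_iUnion.mpr ⟨y, hmem y n⟩)
  choose t ht using hsub
  have hbB : TopologicalSpace.IsTopologicalBasis (⋃ n : ℕ, (fun x => C x n) '' ↑(t n)) := by
    apply TopologicalSpace.isTopologicalBasis_of_isOpen_of_nhds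
    · rintro s hs
      simp only [Set.mem_iUnion, Set.mem_image] at hs
      obtain ⟨n, x, -, rfl⟩ := hs
      exact hCopen x n
    · intro a U haU hU
      have htend : Filter.Tendsto (fun y : R => a + y) (nhds 0) (nhds a) := by
        simpa using (continuous_add_left a).tendsto 0
      obtain ⟨n, hn⟩ := hbasis _ (htend (hU.mem_nhds haU))
      obtain ⟨x, hxt, hx⟩ : ∃ x ∈ t n, a ∈ C x n := by
        have := ht n (Set.mem_univ a)
        simpa using this
      refine ⟨C x n, ?_, hx, ?_⟩
      · exact Set.mem_iUnion.mpr ⟨n, Set.mem_image_of_mem _ hxt⟩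
      · rw [hCeq hx]
        intro z hz
        have : a + (z - a) ∈ U := hn hz
        simpa using this
  exact hbB.secondCountableTopology
    (Set.countable_iUnion fun n => ((t n).finite_toSet.image _).countable)

/-- Assume `p = 3`. Define `φ : R_P^5 → R_P^3` by
`φ(a₁,a₂,a₃,a₄,a₆) = (b₂/4, b₄/2, b₆/4)`, where `b₂ = a₁² + 4a₂`, `b₄ = a₁a₃ + 2a₄`,
`b₆ = a₃² + 4a₆`. Then for every open subset `U` of `R_P^3`, `μ_P(φ⁻¹(U)) = μ_P(U)`,
the measures being the normalized Haar measures on (the integer points of) `K_P^5` and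
`K_P^3` respectively. -/
theorem stmt_10 {R : Type*} [CommRing R] [IsDomain R] [IsDiscreteValuationRing R]
    [TopologicalSpace R] [IsTopologicalRing R] [CompactSpace R]
    [MeasurableSpace R] [BorelSpace R]
    (hadic : IsAdic (IsLocalRing.maximalIdeal R))
    [Finite (IsLocalRing.ResidueField R)]
    [CharP R 3]
    (μ₅ : Measure (Fin 5 → R)) [μ₅.IsAddHaarMeasure] [IsProbabilityMeasure μ₅] [μ₅.Regular]
    (μ₃ : Measure (Fin 3 → R)) [μ₃.IsAddHaarMeasure] [IsProbabilityMeasure μ₃] [μ₃.Regular]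
    (U : Set (Fin 3 → R)) (hU : IsOpen U) :
    μ₅ ((fun x : Fin 5 → R =>
        ![Ring.inverse (4 : R) * ((x 0) ^ 2 + 4 * x 1),
          Ring.inverse (2 : R) * (x 0 * x 2 + 2 * x 3),
          Ring.inverse (4 : R) * ((x 2) ^ 2 + 4 * x 4)]) ⁻¹' U) = μ₃ U := by
  haveI : SecondCountableTopology R := secondCountable_of_adic_compact _ hadic
  have h3 : (3 : R) = 0 := CharP.cast_eq_zero R 3
  have h4 : (4 : R) = 1 := by
    have : (4 : R) = 3 + 1 := by norm_num
    rw [this, h3, zero_add]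
  have h2 : (2 : R) = -1 := by
    have : (2 : R) = 3 - 1 := by norm_num
    rw [this, h3]; ring
  have hinv4 : Ring.inverse (4 : R) = 1 := by rw [h4, Ring.inverse_one]
  have hinvneg : Ring.inverse (-1 : R) = -1 := by
    have hu : ((-1 : Rˣ) : R) = -1 := by simp
    rw [← hu, Ring.inverse_unit]
    simp
  have hinv2 : Ring.inverse (2 : R) = -1 := by rw [h2, hinvneg]
  set ψ : (Fin 5 → R) → (Fin 3 → R) :=
    fun x => ![x 0 ^ 2 + x 1, x 3 - x 0 * x 2, x 2 ^ 2 + x 4] with hψdef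
  have hfun : (fun x : Fin 5 → R =>
      ![Ring.inverse (4 : R) * ((x 0) ^ 2 + 4 * x 1),
        Ring.inverse (2 : R) * (x 0 * x 2 + 2 * x 3),
        Ring.inverse (4 : R) * ((x 2) ^ 2 + 4 * x 4)]) = ψ := by
    funext x
    ext i
    fin_cases i <;> simp [hψdef, hinv4, hinv2, hinvneg, h4, h2] <;> ring
  rw [hfun]
  have hψc : Continuous ψ := by
    rw [hψdef]
    refine continuous_pi fun i => ?_
    fin_cases i <;> simp <;> fun_prop
  have hψm : Measurable ψ := hψc.measurable
  have hinv : Measure.IsAddLeftInvariant (μ₅.map ψ) := by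
    constructor
    intro t
    rw [Measure.map_map (measurable_const_add t) hψm]
    have hkey : (fun y => t + y) ∘ ψ
        = ψ ∘ (fun y => (![0, t 0, 0, t 1, t 2] : Fin 5 → R) + y) := by
      funext x
      ext i
      fin_cases i <;>
        simp [hψdef, Pi.add_apply, Matrix.vecHead, Matrix.vecTail,
          show (Fin.succ 2 : Fin 5) = 3 from rfl, show ((Fin.succ 2).succ : Fin 5) = 4 from rfl] <;> ring
    rw [hkey, ← Measure.map_map hψm (measurable_const_add _),
      map_add_left_eq_self μ₅ _]
  have hop : (μ₅.map ψ).IsOpenPosMeasure := by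
    constructor
    intro V hV hVne
    rw [Measure.map_apply hψm hV.measurableSet]
    obtain ⟨v, hv⟩ := hVne
    have hsur : ψ ![0, v 0, 0, v 1, v 2] = v := by
      ext i
      fin_cases i <;> simp [hψdef]
    exact (hV.preimage hψc).measure_ne_zero μ₅ ⟨![0, v 0, 0, v 1, v 2], Set.mem_preimage.mpr (hsur.symm ▸ hv)⟩
  haveI : IsProbabilityMeasure (μ₅.map ψ) := Measure.isProbabilityMeasure_map hψm.aemeasurable
  haveI hHaar : (μ₅.map ψ).IsAddHaarMeasure :=
    { toIsFiniteMeasureOnCompacts := inferInstance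
      toIsAddLeftInvariant := hinv
      toIsOpenPosMeasure := hop }
  have := Measure.isAddHaarMeasure_eq_of_isProbabilityMeasure (μ₅.map ψ) μ₃
  rw [← Measure.map_apply hψm hU.measurableSet, this]
end

section
/- Assume p = 3 and let k be a nonnegative integer. Let a2, a4, a6 ∈ R_P and let n1, n2 ∈ R_P be such that v_P(a2) ≥ 2k, and for each i ∈ {1,2}: v_P(2·n_i·a2 + a4) ≥ 4k and v_P(n_i²·a2 + n_i·a4 + a6 + n_i³) ≥ 6k. Then v_P(n1 − n2) ≥ 2k. -/
/-- Assume `p = 3` and let `k ≥ 0`. Let `a₂, a₄, a₆ ∈ R_P` and let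
`n₁, n₂ ∈ R_P` be such that `v_P(a₂) ≥ 2k` and, for each `i ∈ {1, 2}`,
`v_P(2nᵢa₂ + a₄) ≥ 4k` and `v_P(nᵢ²a₂ + nᵢa₄ + a₆ + nᵢ³) ≥ 6k`.
Then `v_P(n₁ − n₂) ≥ 2k`. -/
theorem stmt_11 {R : Type*} [CommRing R] [IsDomain R] [IsDiscreteValuationRing R]
    [CharP R 3] (π : R) (hπ : Irreducible π) (k : ℕ)
    (a₂ a₄ a₆ n₁ n₂ : R)
    (ha : π ^ (2 * k) ∣ a₂)
    (h₁ : π ^ (4 * k) ∣ 2 * n₁ * a₂ + a₄)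
    (h₁' : π ^ (6 * k) ∣ n₁ ^ 2 * a₂ + n₁ * a₄ + a₆ + n₁ ^ 3)
    (h₂ : π ^ (4 * k) ∣ 2 * n₂ * a₂ + a₄)
    (h₂' : π ^ (6 * k) ∣ n₂ ^ 2 * a₂ + n₂ * a₄ + a₆ + n₂ ^ 3) :
    π ^ (2 * k) ∣ n₁ - n₂ := by
  set d := n₁ - n₂ with hd
  by_cases hd0 : d = 0
  · rw [hd0]; exact dvd_zero _
  obtain ⟨m, u, hu⟩ := IsDiscreteValuationRing.eq_unit_mul_pow_irreducible hd0 hπ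
  by_cases hm : 2 * k ≤ m
  · exact dvd_trans (pow_dvd_pow π hm) ⟨u, by rw [hu]; ring⟩
  push_neg at hm
  have h3 : (3 : R) = 0 := CharP.cast_eq_zero R 3
  -- key identity: d^2 * (d - a₂) = (w₁ - w₂) - d * u₁ - 3*n₁*n₂*d
  have key : π ^ (m + 4 * k) ∣ d ^ 2 * (d - a₂) := by
    have e1 : π ^ (m + 4 * k) ∣ d * (2 * n₁ * a₂ + a₄) := by
      rw [pow_add]
      exact mul_dvd_mul ⟨u, by rw [hu]; ring⟩ h₁
    have e2 : π ^ (m + 4 * k) ∣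
        (n₁ ^ 2 * a₂ + n₁ * a₄ + a₆ + n₁ ^ 3) - (n₂ ^ 2 * a₂ + n₂ * a₄ + a₆ + n₂ ^ 3) := by
      refine dvd_trans (pow_dvd_pow π ?_) (dvd_sub h₁' h₂')
      omega
    have := dvd_sub e2 e1
    have hid : d ^ 2 * (d - a₂) =
        ((n₁ ^ 2 * a₂ + n₁ * a₄ + a₆ + n₁ ^ 3) - (n₂ ^ 2 * a₂ + n₂ * a₄ + a₆ + n₂ ^ 3))
        - d * (2 * n₁ * a₂ + a₄) := by
      rw [hd]; linear_combination (- n₁ * n₂ * (n₁ - n₂)) * h3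
    rw [hid]; exact this
  have hcancel : π ^ (4 * k - m) ∣ (u : R) ^ 2 * (d - a₂) := by
    have hrw : d ^ 2 * (d - a₂) = π ^ (2 * m) * ((u : R) ^ 2 * (d - a₂)) := by
      rw [hu]; ring
    have hsplit : π ^ (m + 4 * k) = π ^ (2 * m) * π ^ (4 * k - m) := by
      rw [← pow_add]; congr 1; omega
    rw [hrw, hsplit] at key
    exact (mul_dvd_mul_iff_left (pow_ne_zero _ hπ.ne_zero)).mp key
  have hda : π ^ (2 * k) ∣ d - a₂ := by
    refine dvd_trans (pow_dvd_pow π (by omega : 2 * k ≤ 4 * k - m)) ?_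
    have : (u : R) ^ 2 * (d - a₂) = (d - a₂) * (u : R) ^ 2 := by ring
    rw [this] at hcancel
    exact (Units.dvd_mul_right (u := u ^ 2)).mp hcancel
  have : d = (d - a₂) + a₂ := by ring
  rw [hd] at this ⊢
  rw [this]
  exact dvd_add hda ha
end

section
/- Assume p = 3. Let N be a nonnegative integer and a2, a4, a6 ∈ R_P with v_P(a2) = 1. Suppose n1 ∈ R_P satisfies v_P(2·n1·a2 + a4) ≥ ⌊(N+6)/2⌋ and v_P(n1³ + n1²·a2 + n1·a4 + a6) ≥ N + 4. Then an element n2 ∈ R_P satisfies v_P(2·n2·a2 + a4) ≥ ⌊(N+6)/2⌋ and v_P(n2³ + n2²·a2 + n2·a4 + a6) ≥ N + 4 if and only if v_P(n1 − n2) ≥ ⌊(N+4)/2⌋. -/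
/-- Assume `p = 3`. Let `N ≥ 0` and `a₂, a₄, a₆ ∈ R_P` with `v_P(a₂) = 1`.
Suppose `n₁ ∈ R_P` satisfies `v_P(2n₁a₂ + a₄) ≥ ⌊(N+6)/2⌋` and
`v_P(n₁³ + n₁²a₂ + n₁a₄ + a₆) ≥ N + 4`. Then `n₂ ∈ R_P` satisfies
`v_P(2n₂a₂ + a₄) ≥ ⌊(N+6)/2⌋` and `v_P(n₂³ + n₂²a₂ + n₂a₄ + a₆) ≥ N + 4` if and only if
`v_P(n₁ − n₂) ≥ ⌊(N+4)/2⌋`. -/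
theorem stmt_14 {R : Type*} [CommRing R] [IsDomain R] [IsDiscreteValuationRing R]
    [CharP R 3] (π : R) (hπ : Irreducible π) (N : ℕ)
    (a₂ a₄ a₆ n₁ n₂ : R)
    (ha : π ∣ a₂) (ha' : ¬ π ^ 2 ∣ a₂)
    (h₁ : π ^ ((N + 6) / 2) ∣ 2 * n₁ * a₂ + a₄)
    (h₂ : π ^ (N + 4) ∣ n₁ ^ 3 + n₁ ^ 2 * a₂ + n₁ * a₄ + a₆) :
    (π ^ ((N + 6) / 2) ∣ 2 * n₂ * a₂ + a₄
        ∧ π ^ (N + 4) ∣ n₂ ^ 3 + n₂ ^ 2 * a₂ + n₂ * a₄ + a₆)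
      ↔ π ^ ((N + 4) / 2) ∣ n₁ - n₂ := by

  obtain ⟨u, hu⟩ := ha
  have hu' : ¬ π ∣ u := by
    rintro ⟨w, hw⟩
    exact ha' ⟨w, by rw [hu, hw]; ring⟩
  have h3 : (3 : R) = 0 := by exact_mod_cast CharP.cast_eq_zero R 3
  have hkey : (N + 6) / 2 = (N + 4) / 2 + 1 := by omega
  set k := (N + 4) / 2 with hk
  have h2ne : ¬ π ∣ (2 : R) := by
    intro h
    have e2 : (2 : R) = -1 := by linear_combination h3
    rw [e2] at h
    exact hπ.not_isUnit (isUnit_of_dvd_unit h isUnit_one.neg)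
  have hπ0 : π ≠ 0 := hπ.ne_zero
  constructor
  · rintro ⟨h₁', h₂'⟩
    have hd : π ^ (k + 1) ∣ (2 * (n₂ - n₁) * u) * π := by
      have := dvd_sub (hkey ▸ h₁') (hkey ▸ h₁)
      convert this using 1
      rw [hu]; ring
    rw [pow_succ] at hd
    have hd2 : π ^ k ∣ 2 * (n₂ - n₁) * u :=
      (mul_dvd_mul_iff_right hπ0).mp hd
    have hd3 : π ^ k ∣ 2 * (n₂ - n₁) :=
      hπ.prime.pow_dvd_of_dvd_mul_right k hu' hd2
    have hd4 : π ^ k ∣ n₂ - n₁ := by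
      have : π ^ k ∣ (n₂ - n₁) * 2 := by rwa [mul_comm] at hd3
      exact hπ.prime.pow_dvd_of_dvd_mul_right k h2ne this
    exact (dvd_sub_comm).mp hd4
  · intro hd
    have hd' : π ^ k ∣ n₂ - n₁ := (dvd_sub_comm).mp hd
    obtain ⟨c, hc⟩ := hd'
    constructor
    · rw [hkey]
      have e : 2 * n₂ * a₂ + a₄ = (2 * n₁ * a₂ + a₄) + 2 * (n₂ - n₁) * a₂ := by ring
      rw [e]
      refine dvd_add (hkey ▸ h₁) ⟨2 * c * u, ?_⟩
      rw [hc, hu, pow_succ]; ring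
    · have e : n₂ ^ 3 + n₂ ^ 2 * a₂ + n₂ * a₄ + a₆ =
          (n₁ ^ 3 + n₁ ^ 2 * a₂ + n₁ * a₄ + a₆) + (n₂ - n₁) ^ 3 + (n₂ - n₁) ^ 2 * a₂
            + (n₂ - n₁) * (2 * n₁ * a₂ + a₄)
            + 3 * (n₁ ^ 2 * (n₂ - n₁) + n₁ * (n₂ - n₁) ^ 2) := by ring
      rw [e, h3, zero_mul, add_zero]
      have d1 : π ^ (N + 4) ∣ (n₂ - n₁) ^ 3 := by
        refine (pow_dvd_pow π (show N + 4 ≤ k * 3 by omega)).trans ⟨c ^ 3, ?_⟩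
        rw [hc, mul_pow, ← pow_mul]
      have d2 : π ^ (N + 4) ∣ (n₂ - n₁) ^ 2 * a₂ := by
        refine (pow_dvd_pow π (show N + 4 ≤ k * 2 + 1 by omega)).trans ⟨c ^ 2 * u, ?_⟩
        rw [hc, hu, mul_pow, ← pow_mul, pow_succ]; ring
      have d3 : π ^ (N + 4) ∣ (n₂ - n₁) * (2 * n₁ * a₂ + a₄) := by
        refine (pow_dvd_pow π (show N + 4 ≤ k + (k + 1) by omega)).trans ?_
        rw [pow_add]
        exact mul_dvd_mul ⟨c, hc⟩ (hkey ▸ h₁)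
      exact dvd_add (dvd_add (dvd_add h₂ d1) d2) d3
end

section
/- Assume p = 2 and let k be a nonnegative integer. Let a3 ∈ R_P with v_P(a3) ≥ 3k. (i) If l1, l2 ∈ R_P satisfy v_P((l1⁴ + a3·l1) − (l2⁴ + a3·l2)) ≥ 4k, then v_P(l1 − l2) ≥ k. (ii) If m1, m2 ∈ R_P satisfy v_P((m1² + a3·m1) − (m2² + a3·m2)) ≥ 6k, then v_P(m1 − m2) ≥ 3k. -/
open IsDiscreteValuationRing

private lemma key_dvd {R : Type*} [CommRing R] [IsDomain R] [IsDiscreteValuationRing R]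
    [CharP R 2] {π : R} (hπ : Irreducible π) (m b c : ℕ) (hm : 2 ≤ m) (hb : (m - 1) * c ≤ b)
    (a d : R) (ha : π ^ b ∣ a) (h : π ^ (m * c) ∣ d ^ m + a * d) : π ^ c ∣ d := by
  by_contra hcd
  have hd0 : d ≠ 0 := by rintro rfl; exact hcd (dvd_zero _)
  obtain ⟨n, hn'⟩ := WithTop.ne_top_iff_exists.mp
    (fun h => hd0 (addVal_eq_top_iff.mp h))
  have hn : addVal R d = n := hn'.symm
  have hnc : ¬ c ≤ n := by
    intro hle
    apply hcd
    rw [← addVal_le_iff_dvd, hπ.addVal_pow, hn]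
    exact_mod_cast hle
  have h1 : ((m * c : ℕ) : ℕ∞) ≤ addVal R (d ^ m + a * d) := by
    rw [← hπ.addVal_pow]; exact addVal_le_iff_dvd.mpr h
  have h2 : ((b : ℕ) : ℕ∞) ≤ addVal R a := by
    rw [← hπ.addVal_pow]; exact addVal_le_iff_dvd.mpr ha
  have h3 : ((b + n : ℕ) : ℕ∞) ≤ addVal R (a * d) := by
    rw [addVal_mul, hn, Nat.cast_add]
    exact add_le_add_left h2 _
  have h4 : addVal R (d ^ m) = ((m * n : ℕ) : ℕ∞) := by
    rw [addVal_pow, hn]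
    simp [nsmul_eq_mul]
  have h5 : min (addVal R (d ^ m + a * d)) (addVal R (a * d))
      ≤ ((m * n : ℕ) : ℕ∞) := by
    rw [← h4]
    have h2 : (2 : R) = 0 := by exact_mod_cast CharP.cast_eq_zero R 2
    have hrw : d ^ m = (d ^ m + a * d) + a * d := by
      linear_combination (-(a * d)) * h2
    calc min (addVal R (d ^ m + a * d)) (addVal R (a * d))
        ≤ addVal R ((d ^ m + a * d) + a * d) := (addVal R).map_add _ _
      _ = addVal R (d ^ m) := by rw [← hrw]
  rcases min_le_iff.mp h5 with h6 | h6
  · have : ((m * c : ℕ) : ℕ∞) ≤ ((m * n : ℕ) : ℕ∞) := le_trans h1 h6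
    have hmn : m * c ≤ m * n := by exact_mod_cast this
    exact hnc (Nat.le_of_mul_le_mul_left hmn (by omega))
  · have : ((b + n : ℕ) : ℕ∞) ≤ ((m * n : ℕ) : ℕ∞) := le_trans h3 h6
    have hbn : b + n ≤ m * n := by exact_mod_cast this
    obtain ⟨m', rfl⟩ : ∃ m', m = m' + 2 := ⟨m - 2, by omega⟩
    have hb' : (m' + 1) * c ≤ b := by simpa using hb
    have hmul : (m' + 1) * c ≤ (m' + 1) * n := by nlinarith
    exact hnc (Nat.le_of_mul_le_mul_left hmul (by omega))

/-- Assume `p = 2` and let `k ≥ 0`. Let `a₃ ∈ R_P` with `v_P(a₃) ≥ 3k`.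
(i) If `l₁, l₂ ∈ R_P` satisfy `v_P((l₁⁴ + a₃l₁) − (l₂⁴ + a₃l₂)) ≥ 4k`, then
`v_P(l₁ − l₂) ≥ k`. (ii) If `m₁, m₂ ∈ R_P` satisfy
`v_P((m₁² + a₃m₁) − (m₂² + a₃m₂)) ≥ 6k`, then `v_P(m₁ − m₂) ≥ 3k`. -/
theorem stmt_18 {R : Type*} [CommRing R] [IsDomain R] [IsDiscreteValuationRing R]
    [CharP R 2] (π : R) (hπ : Irreducible π) (k : ℕ)
    (a₃ : R) (ha : π ^ (3 * k) ∣ a₃) :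
    (∀ l₁ l₂ : R, π ^ (4 * k) ∣ (l₁ ^ 4 + a₃ * l₁) - (l₂ ^ 4 + a₃ * l₂)
      → π ^ k ∣ l₁ - l₂) ∧
    (∀ m₁ m₂ : R, π ^ (6 * k) ∣ (m₁ ^ 2 + a₃ * m₁) - (m₂ ^ 2 + a₃ * m₂)
      → π ^ (3 * k) ∣ m₁ - m₂) := by
  have h2 : (2 : R) = 0 := by exact_mod_cast CharP.cast_eq_zero R 2
  constructor
  · intro l₁ l₂ hdvd
    apply key_dvd hπ 4 (3 * k) k (by norm_num) (by omega) a₃ (l₁ - l₂) ha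
    have heq : (l₁ - l₂) ^ 4 + a₃ * (l₁ - l₂)
        = (l₁ ^ 4 + a₃ * l₁) - (l₂ ^ 4 + a₃ * l₂) := by
      linear_combination (-2 * l₁ ^ 3 * l₂ + 3 * l₁ ^ 2 * l₂ ^ 2 - 2 * l₁ * l₂ ^ 3 + l₂ ^ 4) * h2
    rwa [heq]
  · intro m₁ m₂ hdvd
    apply key_dvd hπ 2 (3 * k) (3 * k) (by norm_num) (by omega) a₃ (m₁ - m₂) ha
    have heq : (m₁ - m₂) ^ 2 + a₃ * (m₁ - m₂)
        = (m₁ ^ 2 + a₃ * m₁) - (m₂ ^ 2 + a₃ * m₂) := by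
      linear_combination (-(m₁ * m₂) + m₂ ^ 2) * h2
    have h63 : 2 * (3 * k) = 6 * k := by ring
    rw [h63, heq]; exact hdvd
end
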